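/- arXiv:1108.6310 — 11 statements merged into one kernel-verified Lean document; each statement's English description precedes it below -/
import Mathlib

section
/- Let p be an odd prime and let a, c, d be nonzero elements of F_p. Then the system a·U² + c·W² = d·Z², U·W = V² has a nontrivial solution (u, v, w, z) ∈ F_p⁴, i.e., a solution with not all coordinates zero. -/
open Finset

lemma sqrt_card_le_two {p : ℕ} [Fact p.Prime] (q : ZMod p) :
    #{x : ZMod p | x ^ 2 = q} ≤ 2 := by
  classical
  rcases ({x : ZMod p | x ^ 2 = q} : Finset (ZMod p)).eq_empty_or_nonempty with h | ⟨x₀, hx₀⟩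
  · simp [h]
  · simp only [mem_filter, mem_univ, true_and] at hx₀
    have hsub : ({x : ZMod p | x ^ 2 = q} : Finset (ZMod p)) ⊆ {x₀, -x₀} := by
      intro x hx
      simp only [mem_filter, mem_univ, true_and] at hx
      have : (x - x₀) * (x + x₀) = 0 := by linear_combination hx - hx₀
      rcases mul_eq_zero.mp this with h | h
      · simp [sub_eq_zero.mp h]
      · simp [eq_neg_of_add_eq_zero_left h]
    exact (Finset.card_le_card hsub).trans ((Finset.card_insert_le _ _).trans (by simp))

lemma key_lemma {p : ℕ} [Fact p.Prime] (hp : Odd p) (f : ZMod p) (hf : f ≠ 0) :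
    ∃ x : ZMod p, x ^ 4 + f ^ 2 = 0 ∨ ¬ IsSquare (x ^ 4 + f ^ 2) := by
  classical
  by_contra hcon
  push_neg at hcon
  have hp2 : p ≠ 2 := by rintro rfl; simp [Nat.odd_iff] at hp
  have hp3 : 3 ≤ p := by have := (Fact.out : p.Prime).two_le; omega
  have h2 : (2 : ZMod p) ≠ 0 := by
    have : ¬ ((2 : ℕ) : ZMod p) = 0 := by
      rw [ZMod.natCast_eq_zero_iff]
      intro h; have := Nat.le_of_dvd (by norm_num) h; omega
    simpa using this
  choose hne hsq using hcon
  choose Y hY using hsq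
  have hYsq : ∀ x : ZMod p, (Y x) ^ 2 = x ^ 4 + f ^ 2 := fun x => by
    rw [sq]; exact (hY x).symm
  have hYne : ∀ x : ZMod p, Y x ≠ 0 := fun x h =>
    hne x (by rw [← hYsq x, h]; ring)
  set Φ : ZMod p × Bool → ZMod p := fun q => (if q.2 then Y q.1 else -Y q.1) - q.1 ^ 2 with hΦ
  have himg : ∀ q : ZMod p × Bool, q ∈ (univ : Finset (ZMod p × Bool)) →
      Φ q ∈ (univ : Finset (ZMod p)).erase 0 := by
    rintro ⟨x, b⟩ -
    refine Finset.mem_erase.mpr ⟨?_, mem_univ _⟩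
    intro h0
    have hy : (if b then Y x else -Y x) = x ^ 2 := sub_eq_zero.mp h0
    have hy2 : (Y x) ^ 2 = x ^ 4 := by
      rcases b with _ | _
      · simp only [Bool.false_eq_true, if_false] at hy
        linear_combination (x ^ 2 - Y x) * hy
      · simp only [if_true] at hy
        linear_combination (Y x + x ^ 2) * hy
    have hf2 : f ^ 2 = 0 := by linear_combination hy2 - hYsq x
    exact hf (pow_eq_zero_iff (two_ne_zero) |>.mp hf2)
  have hfib : ∀ s ∈ (univ : Finset (ZMod p)).erase 0,
      #{q ∈ (univ : Finset (ZMod p × Bool)) | Φ q = s} ≤ 2 := by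
    intro s hs
    have hs0 : s ≠ 0 := (Finset.mem_erase.mp hs).1
    -- the fiber injects into square roots of (f^2 - s^2)/(2s)
    set q0 : ZMod p := (f ^ 2 - s ^ 2) / (2 * s) with hq0
    have : #{q ∈ (univ : Finset (ZMod p × Bool)) | Φ q = s}
        ≤ #{x : ZMod p | x ^ 2 = q0} := by
      have hyv : ∀ x : ZMod p, ∀ b : Bool, ((x, b) ∈ {q ∈ (univ : Finset (ZMod p × Bool)) | Φ q = s}) →
          (if b then Y x else -Y x) = s + x ^ 2 := by
        intro x b hq
        simp only [mem_filter, mem_univ, true_and] at hq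
        have : (if b then Y x else -Y x) - x ^ 2 = s := hq
        linear_combination this
      apply Finset.card_le_card_of_injOn (fun q => q.1)
      · rintro ⟨x, b⟩ hq
        simp only [Finset.mem_coe, mem_filter, mem_univ, true_and, hq0]
        have hy := hyv x b hq
        have hy2 : (s + x ^ 2) ^ 2 = x ^ 4 + f ^ 2 := by
          rcases b with _ | _
          · simp only [Bool.false_eq_true, if_false] at hy
            linear_combination (Y x - s - x ^ 2) * hy + hYsq x
          · simp only [if_true] at hy
            linear_combination (-(Y x) - s - x ^ 2) * hy + hYsq x
        rw [eq_div_iff (mul_ne_zero h2 hs0)]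
        linear_combination hy2
      · rintro ⟨x, b⟩ hq ⟨x', b'⟩ hq' (hxx : x = x')
        subst hxx
        have hy := hyv x b hq
        have hy' := hyv x b' hq'
        rcases b with _ | _ <;> rcases b' with _ | _ <;>
          simp only [Bool.false_eq_true, if_false, if_true] at hy hy' <;> try rfl
        · exfalso
          have h2y : (2 : ZMod p) * Y x = 0 := by linear_combination hy' - hy
          exact mul_ne_zero h2 (hYne x) h2y
        · exfalso
          have h2y : (2 : ZMod p) * Y x = 0 := by linear_combination hy - hy'
          exact mul_ne_zero h2 (hYne x) h2y
    calc #{q ∈ (univ : Finset (ZMod p × Bool)) | Φ q = s} ≤ _ := this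
      _ ≤ 2 := sqrt_card_le_two q0
  have hcard := Finset.card_le_mul_card_image_of_maps_to himg 2 hfib
  rw [Finset.card_univ, Fintype.card_prod, ZMod.card, Fintype.card_bool,
    Finset.card_erase_of_mem (mem_univ 0), Finset.card_univ, ZMod.card] at hcard
  omega

theorem stmt6 (p : ℕ) [Fact p.Prime] (hp : Odd p) (a c d : ZMod p)
    (ha : a ≠ 0) (hc : c ≠ 0) (hd : d ≠ 0) :
    ∃ u v w z : ZMod p,
      a * u ^ 2 + c * w ^ 2 = d * z ^ 2 ∧ u * w = v ^ 2 ∧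
      ¬(u = 0 ∧ v = 0 ∧ w = 0 ∧ z = 0) := by
  by_cases h1 : IsSquare (d * a)
  · obtain ⟨r, hr⟩ := h1
    refine ⟨r * a⁻¹, 0, 0, 1, ?_, by ring, fun h => one_ne_zero h.2.2.2⟩
    field_simp
    linear_combination -hr
  by_cases h2 : IsSquare (d * c)
  · obtain ⟨r, hr⟩ := h2
    refine ⟨0, 0, r * c⁻¹, 1, ?_, by ring, fun h => one_ne_zero h.2.2.2⟩
    field_simp
    linear_combination -hr
  have hda0 : d * a ≠ 0 := mul_ne_zero hd ha
  have hdc0 : d * c ≠ 0 := mul_ne_zero hd hc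
  have hχa : quadraticChar (ZMod p) (d * a) = -1 :=
    quadraticChar_neg_one_iff_not_isSquare.mpr h1
  have hχc : quadraticChar (ZMod p) (d * c) = -1 :=
    quadraticChar_neg_one_iff_not_isSquare.mpr h2
  have hprod : quadraticChar (ZMod p) ((d * a) * (d * c)) = 1 := by
    rw [map_mul, hχa, hχc]; norm_num
  obtain ⟨r, hr⟩ := (quadraticChar_one_iff_isSquare (mul_ne_zero hda0 hdc0)).mp hprod
  have hr0 : r ≠ 0 := by
    intro h; rw [h, mul_zero] at hr; exact mul_ne_zero hda0 hdc0 hr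
  set f : ZMod p := r * (d * a)⁻¹ with hfdef
  have hf : c = a * f ^ 2 := by
    field_simp [hfdef]
    have hai := mul_inv_cancel₀ ha
    have hdi := mul_inv_cancel₀ hd
    linear_combination (a * (a⁻¹) ^ 2 * (d⁻¹) ^ 2) * hr - c * (a * a⁻¹ * d * d⁻¹ + 1) * hai - c * (a * a⁻¹ * d * d⁻¹ + 1) * a * a⁻¹ * hdi
  have hf0 : f ≠ 0 := mul_ne_zero hr0 (inv_ne_zero hda0)
  obtain ⟨x, hx⟩ := key_lemma hp f hf0
  rcases hx with hx | hx
  · refine ⟨x ^ 2, x, 1, 0, ?_, by ring, fun h => one_ne_zero h.2.2.1⟩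
    linear_combination a * hx + hf
  · have hx0 : x ^ 4 + f ^ 2 ≠ 0 := fun h => hx (h ▸ IsSquare.zero)
    have hχx : quadraticChar (ZMod p) (x ^ 4 + f ^ 2) = -1 :=
      quadraticChar_neg_one_iff_not_isSquare.mpr hx
    have hprod2 : quadraticChar (ZMod p) ((d * a) * (x ^ 4 + f ^ 2)) = 1 := by
      rw [map_mul, hχa, hχx]; norm_num
    obtain ⟨s, hs⟩ :=
      (quadraticChar_one_iff_isSquare (mul_ne_zero hda0 hx0)).mp hprod2
    refine ⟨x ^ 2, x, 1, s * d⁻¹, ?_, by ring, fun h => one_ne_zero h.2.2.1⟩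
    field_simp
    linear_combination hs + d * hf
end

section
/- Let p be an odd prime and a, c, d nonzero integers. Suppose the system a·U² + c·W² = d·Z², U·W = V² has a strong solution modulo p, i.e., a primitive solution (u,v,w,z) modulo p such that at least one of a·u, c·w, d·z is nonzero modulo p. Then for every k ≥ 1 the system has a strong solution modulo p^k. -/
/-- `(u,v,w,z)` is a strong solution modulo `n` (with distinguished prime `p`) of the system
`a·U² + c·W² = d·Z²`, `U·W = V²`: a primitive solution of the congruences mod `n` such that
at least one of `a·u, c·w, d·z` is not divisible by `p`. -/
def StrongSolution (a c d : ℤ) (p : ℕ) (n : ℤ) (u v w z : ℤ) : Prop :=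
  Int.gcd u (Int.gcd v (Int.gcd w z)) = 1 ∧
  a * u ^ 2 + c * w ^ 2 ≡ d * z ^ 2 [ZMOD n] ∧
  u * w ≡ v ^ 2 [ZMOD n] ∧
  (¬ (p : ℤ) ∣ a * u ∨ ¬ (p : ℤ) ∣ c * w ∨ ¬ (p : ℤ) ∣ d * z)

private lemma solveLin (P e f : ℤ) (h : IsCoprime e P) : ∃ x : ℤ, P ∣ e * x + f := by
  obtain ⟨m, n, hmn⟩ := h
  exact ⟨-(m * f), f * n, by linear_combination (-f) * hmn⟩

private lemma notdvd_two (p : ℕ) (hp : p.Prime) (hodd : Odd p) : ¬ (p : ℤ) ∣ 2 := by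
  intro h
  have h2 : p ∣ 2 := by exact_mod_cast h
  have := (Nat.prime_dvd_prime_iff_eq hp Nat.prime_two).mp h2
  subst this
  simp [Nat.odd_iff] at hodd

private lemma cop (p : ℕ) (hp : p.Prime) {x : ℤ} (hx : ¬ (p:ℤ) ∣ x) : IsCoprime x (p:ℤ) :=
  ((Nat.prime_iff_prime_int.mp hp).coprime_iff_not_dvd.mpr hx).symm

private lemma coprime_lift (N : ℤ) (g : ℕ) (hg : g ≠ 0) (z : ℤ) (hz : IsCoprime z N) :
    ∃ z' : ℤ, z' ≡ z [ZMOD N] ∧ Int.gcd (g : ℤ) z' = 1 := by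
  classical
  set t : ℕ := ∏ q ∈ g.primeFactors.filter (fun q : ℕ => ¬ ((q:ℤ) ∣ z)), q with ht
  refine ⟨z + N * t, Int.ModEq.symm (Int.modEq_iff_dvd.mpr ⟨t, by ring⟩), ?_⟩
  rw [Nat.eq_one_iff_not_exists_prime_dvd]
  intro q hq hqd
  have hqz : (q:ℤ) ∣ Int.gcd (g:ℤ) (z + N * t) := Int.natCast_dvd_natCast.mpr hqd
  have hqg : (q:ℤ) ∣ (g:ℤ) := dvd_trans hqz (Int.gcd_dvd_left _ _)
  have hqz' : (q:ℤ) ∣ z + N * t := dvd_trans hqz (Int.gcd_dvd_right _ _)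
  have hqprime : Prime (q:ℤ) := Nat.prime_iff_prime_int.mp hq
  by_cases hdz : (q:ℤ) ∣ z
  · have hqN : ¬ (q:ℤ) ∣ N := fun hN => hqprime.not_isUnit (hz.isUnit_of_dvd' hdz hN)
    have hqt : ¬ q ∣ t := by
      intro hqt
      obtain ⟨r, hr, hqr⟩ := (hq.prime.dvd_finset_prod_iff _).mp hqt
      rw [Finset.mem_filter] at hr
      have : q = r := (Nat.prime_dvd_prime_iff_eq hq (Nat.prime_of_mem_primeFactors hr.1)).mp hqr
      exact hr.2 (this ▸ hdz)
    have : (q:ℤ) ∣ N * t := (dvd_add_right hdz).mp hqz'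
    rcases hqprime.dvd_mul.mp this with h | h
    · exact hqN h
    · exact hqt (Int.natCast_dvd_natCast.mp (by exact_mod_cast h))
  · have hqmem : q ∈ g.primeFactors.filter (fun q : ℕ => ¬ ((q:ℤ) ∣ z)) := by
      rw [Finset.mem_filter, Nat.mem_primeFactors]
      exact ⟨⟨hq, Int.natCast_dvd_natCast.mp hqg, hg⟩, hdz⟩
    have hqt : (q:ℤ) ∣ (t:ℤ) := Int.natCast_dvd_natCast.mpr (Finset.dvd_prod_of_mem _ hqmem)
    exact hdz (by have := dvd_sub hqz' ((hqt.mul_left N)); simpa using this)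

private lemma ngcd_left_comm (a b c : ℕ) : a.gcd (b.gcd c) = b.gcd (a.gcd c) := by
  rw [← Nat.gcd_assoc, Nat.gcd_comm a b, Nat.gcd_assoc]

private lemma gcd4_z (u v w z : ℤ) :
    Int.gcd u (Int.gcd v (Int.gcd w z)) = Nat.gcd (Int.gcd u (Int.gcd v w)) z.natAbs := by
  simp [Int.gcd]
  simp [Nat.gcd_comm, Nat.gcd_assoc, ngcd_left_comm]

private lemma gcd4_u (u v w z : ℤ) :
    Int.gcd u (Int.gcd v (Int.gcd w z)) = Nat.gcd (Int.gcd v (Int.gcd w z)) u.natAbs := by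
  simp [Int.gcd]
  simp [Nat.gcd_comm, Nat.gcd_assoc, ngcd_left_comm]

private lemma gcd4_w (u v w z : ℤ) :
    Int.gcd u (Int.gcd v (Int.gcd w z)) = Nat.gcd (Int.gcd u (Int.gcd v z)) w.natAbs := by
  simp [Int.gcd]
  simp [Nat.gcd_comm, Nat.gcd_assoc, ngcd_left_comm]

private lemma solve_system (p : ℕ) (hp : p.Prime) (hodd : Odd p) (a c d u v w z t s : ℤ)
    (h1 : (p:ℤ) ∣ d*z^2 - (a*u^2 + c*w^2))
    (hstrong : ¬(p:ℤ) ∣ a*u ∨ ¬(p:ℤ) ∣ c*w ∨ ¬(p:ℤ) ∣ d*z) :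
    ∃ α β γ δ : ℤ, (p:ℤ) ∣ 2*(a*u*α + c*w*β - d*z*δ) - t ∧
      (p:ℤ) ∣ (w*α + u*β - 2*v*γ) - s := by
  set P : ℤ := (p:ℤ)
  have hPp : Prime P := Nat.prime_iff_prime_int.mp hp
  have h2 : ¬ P ∣ 2 := notdvd_two p hp hodd
  by_cases hdz : P ∣ d * z
  · have hdz2 : P ∣ d * z^2 := by have := hdz.mul_right z; simpa [mul_assoc, sq] using this
    have h1' : P ∣ a*u^2 + c*w^2 := by
      have := dvd_sub hdz2 h1; simpa using this
    have hau : ¬ P ∣ a * u := by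
      rintro hau
      rcases hstrong with h | h | h
      · exact h hau
      · have hau2 : P ∣ a * u^2 := by have := hau.mul_right u; simpa [mul_assoc, sq] using this
        have hcw2 : P ∣ c * w^2 := by have := dvd_sub h1' hau2; simpa using this
        rcases hPp.dvd_mul.mp hcw2 with h' | h'
        · exact h (h'.mul_right w)
        · rcases hPp.dvd_mul.mp (by simpa [sq] using h') with h'' | h''
          · exact h (h''.mul_left c)
          · exact h (h''.mul_left c)
      · exact h hdz
    have hcw : ¬ P ∣ c * w := by
      rintro hcw
      have hcw2 : P ∣ c * w^2 := by have := hcw.mul_right w; simpa [mul_assoc, sq] using this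
      have hau2 : P ∣ a * u^2 := by have := dvd_sub h1' hcw2; simpa using this
      rcases hPp.dvd_mul.mp hau2 with h' | h'
      · exact hau (h'.mul_right u)
      · rcases hPp.dvd_mul.mp (by simpa [sq] using h') with h'' | h''
        · exact hau (h''.mul_left a)
        · exact hau (h''.mul_left a)
    have hu : ¬ P ∣ u := fun h => hau (h.mul_left a)
    have he : ¬ P ∣ 2*(a*u^2 - c*w^2) := by
      intro hdvd
      rcases hPp.dvd_mul.mp hdvd with h' | h'
      · exact h2 h'
      · have : P ∣ 2 * (a * u^2) := by
          have := dvd_add h' h1'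
          have heq : a*u^2 - c*w^2 + (a*u^2 + c*w^2) = 2*(a*u^2) := by ring
          rwa [heq] at this
        rcases hPp.dvd_mul.mp this with h'' | h''
        · exact h2 h''
        · have : P ∣ (a*u)*u := by
            have heq : a * u^2 = (a*u)*u := by ring
            rwa [heq] at h''
          rcases hPp.dvd_mul.mp this with h3 | h3
          · exact hau h3
          · exact hu h3
    obtain ⟨α, hα⟩ := solveLin P _ (2*c*w*s - u*t) (cop p hp he)
    obtain ⟨β, hβ⟩ := solveLin P u (w*α - s) (cop p hp hu)
    refine ⟨α, β, 0, 0, ?_, ?_⟩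
    · have key : P ∣ u * (2*(a*u*α + c*w*β - d*z*0) - t) := by
        have heq : u * (2*(a*u*α + c*w*β - d*z*0) - t)
            = (2*(a*u^2 - c*w^2) * α + (2*c*w*s - u*t)) + 2*c*w*(u*β + (w*α - s)) := by ring
        rw [heq]
        exact dvd_add hα (hβ.mul_left _)
      rcases hPp.dvd_mul.mp key with h' | h'
      · exact absurd h' hu
      · exact h'
    · rw [show (w*α + u*β - 2*v*0) - s = u*β + (w*α - s) by ring]
      exact hβ
  · have huw : ¬ P ∣ u ∨ ¬ P ∣ w := by
      by_contra hcon
      push_neg at hcon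
      have h1'' : P ∣ d*z^2 := by
        have hA : P ∣ a*u^2 := by simpa [sq, mul_assoc, mul_comm, mul_left_comm] using (hcon.1.mul_left (a*u))
        have hB : P ∣ c*w^2 := by simpa [sq, mul_assoc, mul_comm, mul_left_comm] using (hcon.2.mul_left (c*w))
        have := dvd_add h1 (dvd_add hA hB)
        simpa using this
      rcases hPp.dvd_mul.mp (by rwa [show d*z^2 = (d*z)*z by ring] at h1'') with h' | h'
      · exact hdz h'
      · exact hdz ((h'.mul_left d))
    have hdz2' : ¬ P ∣ -(2*(d*z)) := by
      intro hdvd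
      rcases hPp.dvd_mul.mp (dvd_neg.mp hdvd) with h' | h'
      · exact h2 h'
      · exact hdz h'
    rcases huw with hu | hw
    · obtain ⟨β, hβ⟩ := solveLin P u (-s) (cop p hp hu)
      obtain ⟨δ, hδ⟩ := solveLin P (-(2*(d*z))) (2*c*w*β - t) (cop p hp hdz2')
      refine ⟨0, β, 0, δ, ?_, ?_⟩
      · rw [show 2*(a*u*0 + c*w*β - d*z*δ) - t = -(2*(d*z))*δ + (2*c*w*β - t) by ring]
        exact hδ
      · rw [show (w*0 + u*β - 2*v*0) - s = u*β + (-s) by ring]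
        exact hβ
    · obtain ⟨α, hα⟩ := solveLin P w (-s) (cop p hp hw)
      obtain ⟨δ, hδ⟩ := solveLin P (-(2*(d*z))) (2*a*u*α - t) (cop p hp hdz2')
      refine ⟨α, 0, 0, δ, ?_, ?_⟩
      · rw [show 2*(a*u*α + c*w*0 - d*z*δ) - t = -(2*(d*z))*δ + (2*a*u*α - t) by ring]
        exact hδ
      · rw [show (w*α + u*0 - 2*v*0) - s = w*α + (-s) by ring]
        exact hα

private lemma make_primitive (p : ℕ) (hp : p.Prime) (a c d : ℤ) (j : ℕ) (hj : 1 ≤ j)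
    (u v w z : ℤ)
    (h1 : (p:ℤ)^j ∣ d*z^2 - (a*u^2 + c*w^2)) (h2 : (p:ℤ)^j ∣ v^2 - u*w)
    (hstr : ¬(p:ℤ) ∣ a*u ∨ ¬(p:ℤ) ∣ c*w ∨ ¬(p:ℤ) ∣ d*z) :
    ∃ u' v' w' z', StrongSolution a c d p ((p:ℤ)^j) u' v' w' z' := by
  set P : ℤ := (p:ℤ) with hPdef
  have hPj : P ∣ P^j := dvd_pow_self P (by omega)
  rcases hstr with hau | hcw | hdzs
  · -- adjust u
    have hu : ¬ P ∣ u := fun h => hau (h.mul_left a)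
    have hcu : IsCoprime u (P^j) := (cop p hp hu).pow_right
    by_cases hg : Int.gcd v (Int.gcd w z) = 0
    · have hv : v = 0 := (Int.gcd_eq_zero_iff.mp hg).1
      have hwz : (Int.gcd w z : ℤ) = 0 := (Int.gcd_eq_zero_iff.mp hg).2
      have hw : w = 0 := (Int.gcd_eq_zero_iff.mp (by exact_mod_cast hwz)).1
      have hz : z = 0 := (Int.gcd_eq_zero_iff.mp (by exact_mod_cast hwz)).2
      subst hv; subst hw; subst hz
      refine ⟨u, 0, 0, P^j, ?_, ?_, ?_, Or.inl hau⟩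
      · have := Int.isCoprime_iff_gcd_eq_one.mp hcu
        simpa [Int.gcd, Int.natAbs_pow, Int.natAbs_abs] using this
      · refine Int.modEq_iff_dvd.mpr ?_
        have H := dvd_add (⟨d*(P^j), by ring⟩ : P^j ∣ d*(P^j)^2 - d*(0:ℤ)^2) h1
        rwa [show (d*(P^j)^2 - d*(0:ℤ)^2) + (d*(0:ℤ)^2 - (a*u^2 + c*0^2)) =
          d*(P^j)^2 - (a*u^2 + c*0^2) by ring] at H
      · exact Int.modEq_iff_dvd.mpr ⟨0, by ring⟩
    · obtain ⟨u', hu'mod, hu'g⟩ := coprime_lift (P^j) _ hg u hcu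
      have hd : P^j ∣ u - u' := Int.ModEq.dvd hu'mod
      refine ⟨u', v, w, z, ?_, ?_, ?_, Or.inl ?_⟩
      · rw [gcd4_u]
        simpa [Int.gcd] using hu'g
      · refine Int.modEq_iff_dvd.mpr ?_
        have H := dvd_add h1 ((hd.mul_left a).mul_right (u + u'))
        rwa [show (d*z^2 - (a*u^2 + c*w^2)) + a*(u - u')*(u + u') =
          d*z^2 - (a*u'^2 + c*w^2) by ring] at H
      · refine Int.modEq_iff_dvd.mpr ?_
        have H := dvd_add h2 (hd.mul_right w)
        rwa [show (v^2 - u*w) + (u - u')*w = v^2 - u'*w by ring] at H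
      · intro hdvd
        apply hau
        rw [show a*u = a*u' + a*(u - u') by ring]
        exact dvd_add hdvd ((dvd_trans hPj hd).mul_left a)
  · -- adjust w
    have hw : ¬ P ∣ w := fun h => hcw (h.mul_left c)
    have hcww : IsCoprime w (P^j) := (cop p hp hw).pow_right
    by_cases hg : Int.gcd u (Int.gcd v z) = 0
    · have hu : u = 0 := (Int.gcd_eq_zero_iff.mp hg).1
      have hvz : (Int.gcd v z : ℤ) = 0 := (Int.gcd_eq_zero_iff.mp hg).2
      have hv : v = 0 := (Int.gcd_eq_zero_iff.mp (by exact_mod_cast hvz)).1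
      have hz : z = 0 := (Int.gcd_eq_zero_iff.mp (by exact_mod_cast hvz)).2
      subst hu; subst hv; subst hz
      refine ⟨0, 0, w, P^j, ?_, ?_, ?_, Or.inr (Or.inl hcw)⟩
      · have := Int.isCoprime_iff_gcd_eq_one.mp hcww
        simpa [Int.gcd] using this
      · refine Int.modEq_iff_dvd.mpr ?_
        have H := dvd_add (⟨d*(P^j), by ring⟩ : P^j ∣ d*(P^j)^2 - d*(0:ℤ)^2) h1
        rwa [show (d*(P^j)^2 - d*(0:ℤ)^2) + (d*(0:ℤ)^2 - (a*0^2 + c*w^2)) =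
          d*(P^j)^2 - (a*0^2 + c*w^2) by ring] at H
      · exact Int.modEq_iff_dvd.mpr ⟨0, by ring⟩
    · obtain ⟨w', hw'mod, hw'g⟩ := coprime_lift (P^j) _ hg w hcww
      have hd : P^j ∣ w - w' := Int.ModEq.dvd hw'mod
      refine ⟨u, v, w', z, ?_, ?_, ?_, Or.inr (Or.inl ?_)⟩
      · rw [gcd4_w]
        simpa [Int.gcd] using hw'g
      · refine Int.modEq_iff_dvd.mpr ?_
        have H := dvd_add h1 ((hd.mul_left c).mul_right (w + w'))
        rwa [show (d*z^2 - (a*u^2 + c*w^2)) + c*(w - w')*(w + w') =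
          d*z^2 - (a*u^2 + c*w'^2) by ring] at H
      · refine Int.modEq_iff_dvd.mpr ?_
        have H := dvd_add h2 (hd.mul_left u)
        rwa [show (v^2 - u*w) + u*(w - w') = v^2 - u*w' by ring] at H
      · intro hdvd
        apply hcw
        rw [show c*w = c*w' + c*(w - w') by ring]
        exact dvd_add hdvd ((dvd_trans hPj hd).mul_left c)
  · -- adjust z
    have hz : ¬ P ∣ z := fun h => hdzs (h.mul_left d)
    have hcz : IsCoprime z (P^j) := (cop p hp hz).pow_right
    by_cases hg : Int.gcd u (Int.gcd v w) = 0
    · have hu : u = 0 := (Int.gcd_eq_zero_iff.mp hg).1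
      have hvw : (Int.gcd v w : ℤ) = 0 := (Int.gcd_eq_zero_iff.mp hg).2
      have hv : v = 0 := (Int.gcd_eq_zero_iff.mp (by exact_mod_cast hvw)).1
      have hw : w = 0 := (Int.gcd_eq_zero_iff.mp (by exact_mod_cast hvw)).2
      subst hu; subst hv; subst hw
      refine ⟨P^j, 0, 0, z, ?_, ?_, ?_, Or.inr (Or.inr hdzs)⟩
      · have := Int.isCoprime_iff_gcd_eq_one.mp hcz
        simp only [Int.gcd] at this ⊢
        simpa [Nat.gcd_comm, Int.natAbs_abs, abs_pow] using this
      · refine Int.modEq_iff_dvd.mpr ?_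
        have H := dvd_sub h1 (⟨a*(P^j), by ring⟩ : P^j ∣ a*(P^j)^2 - a*(0:ℤ)^2)
        rwa [show (d*z^2 - (a*0^2 + c*0^2)) - (a*(P^j)^2 - a*(0:ℤ)^2) =
          d*z^2 - (a*(P^j)^2 + c*0^2) by ring] at H
      · exact Int.modEq_iff_dvd.mpr ⟨0, by ring⟩
    · obtain ⟨z', hz'mod, hz'g⟩ := coprime_lift (P^j) _ hg z hcz
      have hd' : P^j ∣ z - z' := Int.ModEq.dvd hz'mod
      refine ⟨u, v, w, z', ?_, ?_, ?_, Or.inr (Or.inr ?_)⟩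
      · rw [gcd4_z]
        simpa [Int.gcd] using hz'g
      · refine Int.modEq_iff_dvd.mpr ?_
        have H := dvd_sub h1 ((hd'.mul_left d).mul_right (z + z'))
        rwa [show (d*z^2 - (a*u^2 + c*w^2)) - d*(z - z')*(z + z') =
          d*z'^2 - (a*u^2 + c*w^2) by ring] at H
      · exact Int.modEq_iff_dvd.mpr h2
      · intro hdvd
        apply hdzs
        rw [show d*z = d*z' + d*(z - z') by ring]
        exact dvd_add hdvd ((dvd_trans hPj hd').mul_left d)

private lemma lift_step (p : ℕ) (hp : p.Prime) (hodd : Odd p) (a c d : ℤ) (k : ℕ) (hk : 1 ≤ k)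
    (h : ∃ u v w z : ℤ, StrongSolution a c d p ((p:ℤ)^k) u v w z) :
    ∃ u v w z : ℤ, StrongSolution a c d p ((p:ℤ)^(k+1)) u v w z := by
  obtain ⟨u, v, w, z, hg, h1, h2, hstr⟩ := h
  set P : ℤ := (p:ℤ) with hPdef
  have hPk : P ∣ P^k := dvd_pow_self P (by omega)
  obtain ⟨t, ht⟩ : P^k ∣ d*z^2 - (a*u^2 + c*w^2) := by
    have := Int.ModEq.dvd h1
    rwa [show d*z^2 - (a*u^2 + c*w^2) = d*z^2 - (a*u^2 + c*w^2) from rfl]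
  obtain ⟨s, hs⟩ : P^k ∣ v^2 - u*w := Int.ModEq.dvd h2
  have h1p : P ∣ d*z^2 - (a*u^2 + c*w^2) := dvd_trans hPk ⟨t, ht⟩
  obtain ⟨α, β, γ, δ, HX, HY⟩ := solve_system p hp hodd a c d u v w z t s h1p hstr
  obtain ⟨m, hm⟩ := HX
  obtain ⟨n, hn⟩ := HY
  obtain ⟨k', rfl⟩ : ∃ k', k = k' + 1 := ⟨k - 1, by omega⟩
  have C1 : P^(k'+1+1) ∣ d*(z + P^(k'+1)*δ)^2 -
      (a*(u + P^(k'+1)*α)^2 + c*(w + P^(k'+1)*β)^2) := by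
    refine ⟨-m + P^k' * (d*δ^2 - a*α^2 - c*β^2), ?_⟩
    linear_combination ht - P^(k'+1) * hm
  have C2 : P^(k'+1+1) ∣ (v + P^(k'+1)*γ)^2 - (u + P^(k'+1)*α)*(w + P^(k'+1)*β) := by
    refine ⟨-n + P^k' * (γ^2 - α*β), ?_⟩
    linear_combination hs - P^(k'+1) * hn
  have hstr' : ¬P ∣ a*(u + P^(k'+1)*α) ∨ ¬P ∣ c*(w + P^(k'+1)*β) ∨
      ¬P ∣ d*(z + P^(k'+1)*δ) := by
    rcases hstr with hh | hh | hh
    · refine Or.inl fun hdvd => hh ?_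
      rw [show a*u = a*(u + P^(k'+1)*α) - P^(k'+1)*(a*α) by ring]
      exact dvd_sub hdvd (hPk.mul_right _)
    · refine Or.inr (Or.inl fun hdvd => hh ?_)
      rw [show c*w = c*(w + P^(k'+1)*β) - P^(k'+1)*(c*β) by ring]
      exact dvd_sub hdvd (hPk.mul_right _)
    · refine Or.inr (Or.inr fun hdvd => hh ?_)
      rw [show d*z = d*(z + P^(k'+1)*δ) - P^(k'+1)*(d*δ) by ring]
      exact dvd_sub hdvd (hPk.mul_right _)
  exact make_primitive p hp a c d (k'+1+1) (by omega) _ _ _ _ C1 C2 hstr'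

theorem stmt9 (p : ℕ) (hp : p.Prime) (hodd : Odd p) (a c d : ℤ)
    (ha : a ≠ 0) (hc : c ≠ 0) (hd : d ≠ 0)
    (h : ∃ u v w z : ℤ, StrongSolution a c d p (p : ℤ) u v w z) :
    ∀ k : ℕ, 1 ≤ k → ∃ u v w z : ℤ, StrongSolution a c d p ((p : ℤ) ^ k) u v w z := by
  intro k hk
  induction k, hk using Nat.le_induction with
  | base =>
    obtain ⟨u, v, w, z, hg, h1, h2, hs⟩ := h
    exact ⟨u, v, w, z, hg, by rwa [pow_one], by rwa [pow_one], hs⟩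
  | succ n hn ih => exact lift_step p hp hodd a c d n hn ih
end

section
/- Let p be an odd prime not dividing a·c·d, where a, c, d are nonzero integers. Then for every k ≥ 1 the system a·U² + c·W² = d·Z², U·W = V² has a primitive solution modulo p^k. -/
open Polynomial

lemma exists_inv_mod {p : ℕ} (hp : p.Prime) {m : ℤ} (hm : ¬ (p:ℤ) ∣ m) :
    ∃ n : ℤ, (p:ℤ) ∣ m * n - 1 := by
  have hpp : Prime (p:ℤ) := Nat.prime_iff_prime_int.mp hp
  obtain ⟨u, v, huv⟩ := (hpp.coprime_iff_not_dvd.mpr hm)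
  exact ⟨v, ⟨-u, by linarith⟩⟩

lemma hensel_sq {p : ℕ} (hp : p.Prime) (hodd : Odd p) (α β x₀ : ℤ)
    (hα : ¬ (p:ℤ) ∣ α) (hx : ¬ (p:ℤ) ∣ x₀) (h1 : (p:ℤ) ∣ α * x₀^2 - β) :
    ∀ k : ℕ, ∃ x : ℤ, (p:ℤ) ∣ x - x₀ ∧ (p:ℤ)^(k+1) ∣ α * x^2 - β := by
  have hp2 : ¬ (p:ℤ) ∣ 2 := by
    intro h
    have h2 := Int.le_of_dvd (by norm_num) h
    have h3 := hp.two_le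
    rcases hodd with ⟨m, hm⟩
    omega
  intro k
  induction k with
  | zero => exact ⟨x₀, by simp, by simpa using h1⟩
  | succ k ih =>
    obtain ⟨x, hxx, hx2⟩ := ih
    obtain ⟨cc, hcc⟩ := hx2
    have hpx : ¬ (p:ℤ) ∣ x := by
      intro h
      apply hx
      have := dvd_sub h hxx
      simpa using this
    have hkey : ¬ (p:ℤ) ∣ 2*α*x := by
      have hpp : Prime (p:ℤ) := Nat.prime_iff_prime_int.mp hp
      intro h
      rcases (hpp.dvd_mul).mp h with h' | h'
      · rcases (hpp.dvd_mul).mp h' with h'' | h''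
        · exact hp2 h''
        · exact hα h''
      · exact hpx h'
    obtain ⟨m, hm⟩ := exists_inv_mod hp hkey
    obtain ⟨s, hs⟩ := hm
    refine ⟨x + (p:ℤ)^(k+1) * (-(cc * m)), ?_, ?_⟩
    · have hP : (p:ℤ) ∣ (p:ℤ)^(k+1) * (-(cc*m)) :=
        ((dvd_pow_self (p:ℤ) (Nat.succ_ne_zero k)).mul_right _)
      have := dvd_add hxx hP
      convert this using 1
      rfl
      ring
    · exact ⟨-cc*s + (p:ℤ)^k*α*(cc*m)^2, by linear_combination hcc - (p:ℤ)^(k+1)*cc*hs⟩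

lemma adjust_gcd (g q x : ℤ) (h : IsCoprime g q) :
    ∃ x' : ℤ, (q ∣ x' - x) ∧ Int.gcd g x' = 1 := by
  obtain ⟨α, β, hαβ⟩ := h
  set x' : ℤ := x*α*g + β*q with hx'
  refine ⟨x', ⟨β - x*β, by rw [hx']; linear_combination x*hαβ⟩, ?_⟩
  have hdg : (↑(Int.gcd g x') : ℤ) ∣ g := Int.gcd_dvd_left g x'
  have hdx : (↑(Int.gcd g x') : ℤ) ∣ x' := Int.gcd_dvd_right g x'
  have h1 : α*(1-x)*g + x' = 1 := by rw [hx']; linear_combination hαβ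
  have h2 : (↑(Int.gcd g x') : ℤ) ∣ 1 := by
    rw [← h1]; exact dvd_add (hdg.mul_left _) hdx
  have h3 : Int.gcd g x' ∣ 1 := by exact_mod_cast h2
  exact Nat.dvd_one.mp h3

section Field
variable {p : ℕ} [Fact p.Prime]

lemma sum_chi (hchar : ringChar (ZMod p) ≠ 2) :
    ∑ t : ZMod p, quadraticChar (ZMod p) (t^2 - 1) = -1 := by
  classical
  have h2 : (2 : ZMod p) ≠ 0 := Ring.two_ne_zero hchar
  have key : ∑ t ∈ Finset.univ.erase (-1 : ZMod p), quadraticChar (ZMod p) (t^2-1)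
      = ∑ s ∈ Finset.univ.erase (1 : ZMod p), quadraticChar (ZMod p) s := by
    refine Finset.sum_bij' (fun t _ => (t-1)*(t+1)⁻¹) (fun s _ => (1+s)*(1-s)⁻¹)
      ?_ ?_ ?_ ?_ ?_
    · intro t ht
      rw [Finset.mem_erase] at ht ⊢
      refine ⟨?_, Finset.mem_univ _⟩
      have h1 : t + 1 ≠ 0 := fun h => ht.1 (by linear_combination h)
      intro hcon
      beta_reduce at hcon
      have hcc : (t - 1) * (t+1)⁻¹ * (t+1) = 1 * (t+1) := by rw [hcon]
      rw [mul_assoc, inv_mul_cancel₀ h1, mul_one, one_mul] at hcc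
      exact Ring.two_ne_zero hchar (by linear_combination -hcc)
    · intro s hs
      rw [Finset.mem_erase] at hs ⊢
      refine ⟨?_, Finset.mem_univ _⟩
      have h1 : (1:ZMod p) - s ≠ 0 := fun h => hs.1 (by linear_combination -h)
      intro hcon
      beta_reduce at hcon
      have hcc : (1 + s) * (1-s)⁻¹ * (1-s) = (-1) * (1-s) := by rw [hcon]
      rw [mul_assoc, inv_mul_cancel₀ h1, mul_one] at hcc
      exact Ring.two_ne_zero hchar (by linear_combination hcc)
    · intro t ht
      rw [Finset.mem_erase] at ht
      have h1 : t + 1 ≠ 0 := fun h => ht.1 (by linear_combination h)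
      field_simp [h2]
      have h11 : (1:ZMod p)+1 ≠ 0 := by rwa [one_add_one_eq_two]
      rw [show t + 1 - (t - 1) = 2 by ring, div_eq_iff h2]; ring
    · intro s hs
      rw [Finset.mem_erase] at hs
      have h1 : (1:ZMod p) - s ≠ 0 := fun h => hs.1 (by linear_combination -h)
      field_simp [h2]
      have h11 : (1:ZMod p)+1 ≠ 0 := by rwa [one_add_one_eq_two]
      rw [show (1:ZMod p) + s + (1 - s) = 2 by ring, div_eq_iff h2]; ring
    · intro t ht
      rw [Finset.mem_erase] at ht
      have h1 : t + 1 ≠ 0 := fun h => ht.1 (by linear_combination h)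
      have hfac : t^2 - 1 = ((t-1)*(t+1)⁻¹) * (t+1)^2 := by field_simp; ring
      rw [hfac, map_mul, quadraticChar_sq_one' h1, mul_one]
  have h0 : quadraticChar (ZMod p) (((-1:ZMod p))^2 - 1) = 0 := by
    rw [show ((-1:ZMod p))^2 - 1 = 0 by ring, quadraticChar_zero]
  have hsplit : quadraticChar (ZMod p) (((-1:ZMod p))^2 - 1)
      + ∑ t ∈ Finset.univ.erase (-1:ZMod p), quadraticChar (ZMod p) (t^2-1)
      = ∑ t : ZMod p, quadraticChar (ZMod p) (t^2 - 1) :=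
    Finset.add_sum_erase Finset.univ (fun t : ZMod p => quadraticChar (ZMod p) (t^2-1))
      (Finset.mem_univ (-1 : ZMod p))
  have hone : quadraticChar (ZMod p) (1:ZMod p)
      + ∑ s ∈ Finset.univ.erase (1:ZMod p), quadraticChar (ZMod p) s
      = ∑ s : ZMod p, quadraticChar (ZMod p) s :=
    Finset.add_sum_erase Finset.univ (fun s : ZMod p => quadraticChar (ZMod p) s)
      (Finset.mem_univ (1 : ZMod p))
  rw [quadraticChar_sum_zero hchar] at hone
  rw [map_one] at hone
  rw [h0, zero_add, key] at hsplit
  rw [← hsplit]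
  linarith

lemma mul_nonsq (hchar : ringChar (ZMod p) ≠ 2) {x y : ZMod p}
    (hx : ¬IsSquare x) (hy : ¬IsSquare y) : IsSquare (x*y) := by
  classical
  have hx0 : x ≠ 0 := fun h => hx (h ▸ ⟨0, (mul_zero 0).symm⟩)
  have hy0 : y ≠ 0 := fun h => hy (h ▸ ⟨0, (mul_zero 0).symm⟩)
  have h1 : quadraticChar (ZMod p) (x*y) = 1 := by
    rw [map_mul, quadraticChar_neg_one_iff_not_isSquare.mpr hx,
      quadraticChar_neg_one_iff_not_isSquare.mpr hy]
    ring
  exact (quadraticChar_one_iff_isSquare (mul_ne_zero hx0 hy0)).mp h1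

lemma key_t (hp1 : p % 4 = 1) :
    ∃ t : ZMod p, ¬IsSquare t ∧ ¬IsSquare (t^2 - 1) := by
  classical
  have hchar : ringChar (ZMod p) ≠ 2 := by
    rw [ZMod.ringChar_zmod_n]; omega
  have hm1 : IsSquare (-1 : ZMod p) := ZMod.exists_sq_eq_neg_one_iff.mpr (by omega)
  by_contra hcon
  push_neg at hcon
  have hsum1 := sum_chi (p := p) hchar
  have hsum2 := quadraticChar_sum_zero (F := ZMod p) hchar
  have htot : ∑ t : ZMod p, (quadraticChar (ZMod p) (t^2-1) + quadraticChar (ZMod p) t) = -1 := by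
    rw [Finset.sum_add_distrib, hsum1, hsum2]
    norm_num
  have hnn : ∀ t : ZMod p, 0 ≤ quadraticChar (ZMod p) (t^2-1) + quadraticChar (ZMod p) t := by
    intro t
    by_cases ht : IsSquare t
    · by_cases ht0 : t = 0
      · subst ht0
        have : (0:ZMod p)^2 - 1 = -1 := by ring
        rw [this, quadraticChar_zero,
          (quadraticChar_one_iff_isSquare (by simp : (-1:ZMod p) ≠ 0)).mpr hm1]
        norm_num
      · have h1 : quadraticChar (ZMod p) t = 1 :=
          (quadraticChar_one_iff_isSquare ht0).mpr ht
        have h2 := quadraticChar_isQuadratic (ZMod p) (t^2 - 1)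
        rcases h2 with h | h | h <;> rw [h, h1] <;> norm_num
    · have h1 : quadraticChar (ZMod p) t = -1 :=
        quadraticChar_neg_one_iff_not_isSquare.mpr ht
      have hsq : IsSquare (t^2 - 1) := hcon t ht
      have hne : t^2 - 1 ≠ 0 := by
        intro h
        have : (t-1)*(t+1) = 0 := by linear_combination h
        rcases mul_eq_zero.mp this with h' | h'
        · exact ht (by rw [show t = 1 by linear_combination h']; exact IsSquare.one)
        · apply ht
          rw [show t = -1 by linear_combination h']
          exact hm1
      have h2 : quadraticChar (ZMod p) (t^2-1) = 1 :=
        (quadraticChar_one_iff_isSquare hne).mpr hsq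
      rw [h1, h2]
      norm_num
  have hge := Finset.sum_nonneg (s := (Finset.univ : Finset (ZMod p)))
    (f := fun t : ZMod p => quadraticChar (ZMod p) (t^2-1) + quadraticChar (ZMod p) t)
    (fun t _ => hnn t)
  rw [htot] at hge
  norm_num at hge

end Field

lemma solve_sq {F : Type*} [Field F] (α β : F) (hα : α ≠ 0) (h : IsSquare (α*β)) :
    ∃ z : F, α * z^2 = β := by
  obtain ⟨r, hr⟩ := h
  refine ⟨r/α, ?_⟩
  field_simp
  rw [pow_two, ← hr]

lemma isSquare_of_mul_sq {F : Type*} [Field F] {x y : F} (hy : y ≠ 0)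
    (h : IsSquare (x*y^2)) : IsSquare x := by
  obtain ⟨r, hr⟩ := h
  refine ⟨r/y, ?_⟩
  field_simp
  linear_combination hr

lemma isSquare_mul_sq {F : Type*} [Field F] {x : F} (y : F)
    (h : IsSquare x) : IsSquare (x*y^2) := by
  obtain ⟨r, hr⟩ := h
  exact ⟨r*y, by rw [hr]; ring⟩

lemma isSquare_neg_one_of {F : Type*} [Field F] {x : F} (hx : x ≠ 0)
    (h1 : IsSquare x) (h2 : IsSquare (-x)) : IsSquare (-1 : F) := by
  have h3 : IsSquare ((-x) * x) := h2.mul h1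
  obtain ⟨r, hr⟩ := h3
  refine ⟨r/x, ?_⟩
  field_simp
  linear_combination hr

theorem stmt10 (p : ℕ) (hp : p.Prime) (hodd : Odd p) (a c d : ℤ)
    (ha : a ≠ 0) (hc : c ≠ 0) (hd : d ≠ 0) (hpacd : ¬ (p : ℤ) ∣ a * c * d) :
    ∀ k : ℕ, 1 ≤ k → ∃ u v w z : ℤ,
      Int.gcd u (Int.gcd v (Int.gcd w z)) = 1 ∧
      a * u ^ 2 + c * w ^ 2 ≡ d * z ^ 2 [ZMOD ((p : ℤ) ^ k)] ∧
      u * w ≡ v ^ 2 [ZMOD ((p : ℤ) ^ k)] := by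
  intro k hk
  obtain ⟨K, rfl⟩ : ∃ K, k = K + 1 := ⟨k-1, by omega⟩
  haveI : Fact p.Prime := ⟨hp⟩
  have hpp : Prime (p:ℤ) := Nat.prime_iff_prime_int.mp hp
  have hp2 : p ≠ 2 := by rcases hodd with ⟨m, hm⟩; omega
  have hchar : ringChar (ZMod p) ≠ 2 := by rw [ZMod.ringChar_zmod_n]; exact hp2
  have hpa : ¬ (p:ℤ) ∣ a := fun h => hpacd ((h.mul_right c).mul_right d)
  have hpc : ¬ (p:ℤ) ∣ c := fun h => hpacd ((h.mul_left a).mul_right d)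
  have hpd : ¬ (p:ℤ) ∣ d := fun h => hpacd (h.mul_left (a*c))
  have castdvd : ∀ n : ℤ, ((n : ZMod p) = 0) ↔ (p:ℤ) ∣ n :=
    fun n => ZMod.intCast_zmod_eq_zero_iff_dvd n p
  have hA : ((a : ℤ) : ZMod p) ≠ 0 := fun h => hpa ((castdvd a).mp h)
  have hC : ((c : ℤ) : ZMod p) ≠ 0 := fun h => hpc ((castdvd c).mp h)
  have hD : ((d : ℤ) : ZMod p) ≠ 0 := fun h => hpd ((castdvd d).mp h)
  have hp1' : ¬ (p:ℤ) ∣ 1 := by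
    intro h
    have := Int.le_of_dvd one_pos h
    have := hp.two_le
    omega
  set P : ℤ := (p:ℤ)^(K+1) with hP
  by_cases Had : IsSquare ((a : ZMod p) * (d : ZMod p))
  · -- case 1 : w = 0
    obtain ⟨y, hy⟩ := solve_sq ((d:ZMod p)) ((a:ZMod p)) hD (by rwa [mul_comm] at Had)
    have hy0 : y ≠ 0 := by
      intro h
      rw [h] at hy
      simp at hy
      exact hA hy.symm
    obtain ⟨y₀, hy₀⟩ := ZMod.intCast_surjective y
    have hpy : ¬ (p:ℤ) ∣ y₀ := fun h => hy0 (by rw [← hy₀]; exact (castdvd y₀).mpr h)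
    have h1 : (p:ℤ) ∣ d * y₀^2 - a := by
      rw [← castdvd]
      push_cast
      rw [hy₀, hy]
      ring
    obtain ⟨z, hz1, hz2⟩ := hensel_sq hp hodd d a y₀ hpd hpy h1 K
    refine ⟨1, 0, 0, z, by simp, ?_, ?_⟩
    · rw [Int.modEq_iff_dvd]
      convert hz2 using 1
      ring
    · simp [Int.ModEq]
  · by_cases Hcd : IsSquare ((c : ZMod p) * (d : ZMod p))
    · -- case 2 : u = 0
      obtain ⟨y, hy⟩ := solve_sq ((d:ZMod p)) ((c:ZMod p)) hD (by rwa [mul_comm] at Hcd)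
      have hy0 : y ≠ 0 := by
        intro h
        rw [h] at hy
        simp at hy
        exact hC hy.symm
      obtain ⟨y₀, hy₀⟩ := ZMod.intCast_surjective y
      have hpy : ¬ (p:ℤ) ∣ y₀ := fun h => hy0 (by rw [← hy₀]; exact (castdvd y₀).mpr h)
      have h1 : (p:ℤ) ∣ d * y₀^2 - c := by
        rw [← castdvd]
        push_cast
        rw [hy₀, hy]
        ring
      obtain ⟨z, hz1, hz2⟩ := hensel_sq hp hodd d c y₀ hpd hpy h1 K
      refine ⟨0, 0, 1, z, by simp, ?_, ?_⟩
      · rw [Int.modEq_iff_dvd]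
        convert hz2 using 1
        ring
      · simp [Int.ModEq]
    · -- case 3
      have hac : IsSquare ((a : ZMod p) * (c : ZMod p)) := by
        have h1 := mul_nonsq hchar Had Hcd
        have h2 : ((a:ZMod p)*(d:ZMod p))*((c:ZMod p)*(d:ZMod p))
            = ((a:ZMod p)*(c:ZMod p))*((d:ZMod p))^2 := by ring
        rw [h2] at h1
        exact isSquare_of_mul_sq hD h1
      have h4 : p % 4 = 1 ∨ p % 4 = 3 := by
        have := Nat.odd_iff.mp hodd
        omega
      rcases h4 with h41 | h43
      · -- p ≡ 1 mod 4
        have hm1 : IsSquare (-1 : ZMod p) := ZMod.exists_sq_eq_neg_one_iff.mpr (by omega)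
        have hm1' := hm1
        obtain ⟨i, hi⟩ := hm1'
        have hi2 : i^2 = -1 := by rw [pow_two]; exact hi.symm
        have hm10 : (-1 : ZMod p) ≠ 0 := by
          simp only [ne_eq, neg_eq_zero]
          exact one_ne_zero
        have hi0 : i ≠ 0 := fun h => hm10 (by rw [← hi2, h]; norm_num)
        have hacs := hac
        obtain ⟨s, hs⟩ := hacs
        have he : (a:ZMod p) * (s * (a:ZMod p)⁻¹)^2 = (c:ZMod p) := by
          field_simp
          linear_combination hs.symm
        set e : ZMod p := s * (a:ZMod p)⁻¹ with hedef
        have he0 : e ≠ 0 := by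
          intro h
          rw [h] at he
          simp at he
          exact hC he.symm
        by_cases Hie : IsSquare (i*e)
        · -- 3b-i : z = 0 solution
          set w₁ : ZMod p := i*e*(a:ZMod p)*((c:ZMod p))⁻¹ with hw₁def
          have hw1 : (c:ZMod p) * w₁^2 = -(a:ZMod p) := by
            rw [hw₁def]
            have hcc : (c:ZMod p) * (c:ZMod p)⁻¹ = 1 := mul_inv_cancel₀ hC
            linear_combination ((c:ZMod p)*e^2*(a:ZMod p)^2*(c:ZMod p)⁻¹^2) * hi2 - (c:ZMod p)*(a:ZMod p)*(c:ZMod p)⁻¹^2 * he - (a:ZMod p)*((c:ZMod p)*(c:ZMod p)⁻¹+1) * hcc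
          have hw₁sq : IsSquare w₁ := by
            have h5 : w₁ = ((i*e)*((a:ZMod p)*(c:ZMod p)))*(((c:ZMod p))⁻¹)^2 := by
              rw [hw₁def]
              field_simp
            rw [h5]
            exact isSquare_mul_sq _ (Hie.mul hac)
          have hw₁0 : w₁ ≠ 0 := by
            intro h
            apply hA
            have h6 := hw1
            rw [h] at h6
            linear_combination h6
          obtain ⟨w₀, hw₀⟩ := ZMod.intCast_surjective w₁
          have hpw : ¬(p:ℤ) ∣ w₀ := fun h => hw₁0 (by rw [← hw₀]; exact (castdvd w₀).mpr h)
          have h1 : (p:ℤ) ∣ a * 1^2 - (-(c*w₀^2)) := by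
            rw [← castdvd]
            push_cast
            rw [hw₀]
            linear_combination hw1
          obtain ⟨u₁, hu₁1, hu₁2⟩ := hensel_sq hp hodd a (-(c*w₀^2)) 1 hpa hp1' h1 K
          have hu₁cast : ((u₁:ℤ) : ZMod p) = 1 := by
            have h6 := (castdvd (u₁ - 1)).mpr hu₁1
            push_cast at h6
            linear_combination h6
          obtain ⟨ρ, hρ⟩ := hw₁sq
          have hρ0 : ρ ≠ 0 := by
            intro h
            apply hw₁0
            rw [hρ, h]
            ring
          obtain ⟨v₀, hv₀⟩ := ZMod.intCast_surjective ρ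
          have hpv : ¬(p:ℤ) ∣ v₀ := fun h => hρ0 (by rw [← hv₀]; exact (castdvd v₀).mpr h)
          have h2 : (p:ℤ) ∣ 1 * v₀^2 - u₁*w₀ := by
            rw [← castdvd]
            push_cast
            rw [hv₀, hw₀, hu₁cast]
            linear_combination -hρ
          obtain ⟨v, hv1, hv2⟩ := hensel_sq hp hodd 1 (u₁*w₀) v₀ hp1' hpv h2 K
          set G : ℤ := (Int.gcd v (Int.gcd w₀ (0:ℤ)) : ℤ) with hG
          have hpG : ¬(p:ℤ) ∣ G := by
            intro h
            apply hpw
            have h6 : G ∣ w₀ := dvd_trans (Int.gcd_dvd_right _ _) (Int.gcd_dvd_left _ _)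
            exact dvd_trans h h6
          have hcop : IsCoprime G P := ((hpp.coprime_iff_not_dvd.mpr hpG).symm).pow_right
          obtain ⟨u', hu'1, hu'2⟩ := adjust_gcd G P u₁ hcop
          have hmod : u' ≡ u₁ [ZMOD P] := (Int.modEq_iff_dvd.mpr hu'1).symm
          refine ⟨u', v, w₀, 0, ?_, ?_, ?_⟩
          · rw [Int.gcd_comm]
            exact hu'2
          · have step1 : a*u'^2 + c*w₀^2 ≡ a*u₁^2 + c*w₀^2 [ZMOD P] :=
              Int.ModEq.add_right _ ((hmod.pow 2).mul_left a)
            have step2 : a*u₁^2 + c*w₀^2 ≡ d*0^2 [ZMOD P] := by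
              rw [Int.modEq_iff_dvd]
              convert dvd_neg.mpr hu₁2 using 1
              rfl
              ring
            exact step1.trans step2
          · have step1 : u'*w₀ ≡ u₁*w₀ [ZMOD P] := hmod.mul_right w₀
            have step2 : u₁*w₀ ≡ v^2 [ZMOD P] := by
              rw [Int.modEq_iff_dvd]
              convert hv2 using 1
              ring
            exact step1.trans step2
        · -- 3b-ii
          obtain ⟨t, htn, htsq⟩ := key_t (p := p) h41
          have ht0 : t ≠ 0 := fun h => htn (h ▸ ⟨0, (mul_zero 0).symm⟩)
          have ht1 : t + 1 ≠ 0 := by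
            intro h
            apply htn
            have h5 : t = -1 := by linear_combination h
            rw [h5]
            exact ⟨i, hi⟩
          have ht1' : t - 1 ≠ 0 := by
            intro h
            apply htn
            have h5 : t = 1 := by linear_combination h
            rw [h5]
            exact IsSquare.one
          set u : ZMod p := i*e*(t+1) with hudef
          set w : ZMod p := t - 1 with hwdef
          have hu0 : u ≠ 0 := mul_ne_zero (mul_ne_zero hi0 he0) ht1
          have hw0 : w ≠ 0 := ht1'
          have hval : (a:ZMod p)*u^2 + (c:ZMod p)*w^2 = -(4*(c:ZMod p)*t) := by
            rw [hudef, hwdef]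
            linear_combination ((a:ZMod p)*e^2*(t+1)^2) * hi2 - (t+1)^2 * he
          have hsqz : IsSquare ((d:ZMod p) * (-(4*(c:ZMod p)*t))) := by
            have h5 : IsSquare ((c:ZMod p)*(d:ZMod p)*t) :=
              mul_nonsq hchar Hcd htn
            have h6 : IsSquare ((-1) * ((c:ZMod p)*(d:ZMod p)*t)) := hm1.mul h5
            have h7 : (d:ZMod p) * (-(4*(c:ZMod p)*t))
                = ((-1) * ((c:ZMod p)*(d:ZMod p)*t)) * 2^2 := by ring
            rw [h7]
            exact isSquare_mul_sq _ h6
          obtain ⟨z, hz⟩ := solve_sq _ _ hD hsqz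
          have h20 : (2:ZMod p) ≠ 0 := Ring.two_ne_zero hchar
          have h40 : (4:ZMod p) ≠ 0 := by
            have h5 : (4:ZMod p) = 2^2 := by norm_num
            rw [h5]
            exact pow_ne_zero _ h20
          have hz0 : z ≠ 0 := by
            intro h
            apply mul_ne_zero (mul_ne_zero h40 hC) ht0
            have h6 := hz
            rw [h] at h6
            linear_combination h6
          have hsquw : IsSquare (u*w) := by
            have h5 : IsSquare ((i*e)*(t^2-1)) := mul_nonsq hchar Hie htsq
            have h6 : u*w = (i*e)*(t^2-1) := by rw [hudef, hwdef]; ring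
            rw [h6]
            exact h5
          obtain ⟨u₀, hu₀⟩ := ZMod.intCast_surjective u
          obtain ⟨w₀, hw₀⟩ := ZMod.intCast_surjective w
          obtain ⟨z₀, hz₀c⟩ := ZMod.intCast_surjective z
          have hpu : ¬(p:ℤ) ∣ u₀ := fun h => hu0 (by rw [← hu₀]; exact (castdvd u₀).mpr h)
          have hpw : ¬(p:ℤ) ∣ w₀ := fun h => hw0 (by rw [← hw₀]; exact (castdvd w₀).mpr h)
          have hpz : ¬(p:ℤ) ∣ z₀ := fun h => hz0 (by rw [← hz₀c]; exact (castdvd z₀).mpr h)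
          have h1 : (p:ℤ) ∣ d*z₀^2 - (a*u₀^2 + c*w₀^2) := by
            rw [← castdvd]
            push_cast
            rw [hu₀, hw₀, hz₀c, hval, hz]
            ring
          obtain ⟨z₁, hz₁1, hz₁2⟩ := hensel_sq hp hodd d (a*u₀^2 + c*w₀^2) z₀ hpd hpz h1 K
          obtain ⟨ρ, hρ⟩ := hsquw
          have hρ0 : ρ ≠ 0 := by
            intro h
            apply mul_ne_zero hu0 hw0
            rw [hρ, h]
            ring
          obtain ⟨v₀, hv₀⟩ := ZMod.intCast_surjective ρ
          have hpv : ¬(p:ℤ) ∣ v₀ := fun h => hρ0 (by rw [← hv₀]; exact (castdvd v₀).mpr h)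
          have h2 : (p:ℤ) ∣ 1 * v₀^2 - u₀*w₀ := by
            rw [← castdvd]
            push_cast
            rw [hv₀, hu₀, hw₀]
            linear_combination -hρ
          obtain ⟨v, hv1, hv2⟩ := hensel_sq hp hodd 1 (u₀*w₀) v₀ hp1' hpv h2 K
          set G : ℤ := (Int.gcd (Int.gcd u₀ v) w₀ : ℤ) with hG
          have hpG : ¬(p:ℤ) ∣ G := fun h =>
            hpu (dvd_trans (dvd_trans h (Int.gcd_dvd_left _ _)) (Int.gcd_dvd_left _ _))
          have hcop : IsCoprime G P := ((hpp.coprime_iff_not_dvd.mpr hpG).symm).pow_right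
          obtain ⟨z', hz'1, hz'2⟩ := adjust_gcd G P z₁ hcop
          have hmodz : z' ≡ z₁ [ZMOD P] := (Int.modEq_iff_dvd.mpr hz'1).symm
          refine ⟨u₀, v, w₀, z', ?_, ?_, ?_⟩
          · rw [← Int.gcd_assoc, ← Int.gcd_assoc]
            exact hz'2
          · have step1 : a*u₀^2 + c*w₀^2 ≡ d*z₁^2 [ZMOD P] := by
              rw [Int.modEq_iff_dvd]
              exact hz₁2
            have step2 : d*z₁^2 ≡ d*z'^2 [ZMOD P] := ((hmodz.pow 2).mul_left d).symm
            exact step1.trans step2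
          · rw [Int.modEq_iff_dvd]
            convert hv2 using 1
            ring
      · -- p ≡ 3 mod 4
        have hm1 : ¬ IsSquare (-1 : ZMod p) := by
          rw [ZMod.exists_sq_eq_neg_one_iff]
          omega
        have hcard : Fintype.card (ZMod p) % 2 = 1 := by
          rw [ZMod.card]
          exact Nat.odd_iff.mp hodd
        have hdeg : ((C (a:ZMod p)) * X^2).degree = 2 := by
          simpa using Polynomial.degree_C_mul_X_pow 2 hA
        have hf2 : (C (a:ZMod p) * X^2 + C (c:ZMod p)).degree = 2 := by
          rw [Polynomial.degree_add_eq_left_of_degree_lt]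
          · exact hdeg
          · rw [hdeg]
            exact lt_of_le_of_lt Polynomial.degree_C_le (by norm_num)
        have hg2 : (C (-(d:ZMod p)) * X^2).degree = 2 := by
          simpa using Polynomial.degree_C_mul_X_pow 2 (neg_ne_zero.mpr hD)
        obtain ⟨α, β, hαβ⟩ := FiniteField.exists_root_sum_quadratic hf2 hg2 hcard
        simp only [Polynomial.eval_add, Polynomial.eval_mul, Polynomial.eval_pow,
          Polynomial.eval_C, Polynomial.eval_X] at hαβ
        have heq : (a:ZMod p) * α^2 + (c:ZMod p) = (d:ZMod p) * β^2 := by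
          linear_combination hαβ
        have hξex : ∃ ξ : ZMod p, ξ*ξ = α ∨ ξ*ξ = -α := by
          by_cases hsq : IsSquare α
          · obtain ⟨ξ, hξ⟩ := hsq
            exact ⟨ξ, Or.inl hξ.symm⟩
          · have hα0 : α ≠ 0 := fun h => hsq (h ▸ ⟨0, (mul_zero 0).symm⟩)
            by_cases hsq2 : IsSquare (-α)
            · obtain ⟨ξ, hξ⟩ := hsq2
              exact ⟨ξ, Or.inr hξ.symm⟩
            · exfalso
              apply hm1
              have h5 := mul_nonsq hchar hsq hsq2
              have h6 : α * -α = (-1) * α^2 := by ring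
              rw [h6] at h5
              exact isSquare_of_mul_sq hα0 h5
        obtain ⟨ξ, hξ⟩ := hξex
        have hξ4 : ξ^4 = α^2 := by
          rcases hξ with h | h
          · rw [show ξ^4 = (ξ*ξ)^2 by ring, h]
          · rw [show ξ^4 = (ξ*ξ)^2 by ring, h]
            ring
        have hβ0 : β ≠ 0 := by
          intro h
          apply hm1
          rw [h] at heq
          have h8 : (a:ZMod p)*α^2 + (c:ZMod p) = 0 := by
            rw [heq]
            ring
          have h9 : IsSquare (-((a:ZMod p)*(c:ZMod p))) :=
            ⟨(a:ZMod p)*α, by linear_combination -((a:ZMod p))*h8⟩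
          exact isSquare_neg_one_of (mul_ne_zero hA hC) hac h9
        have hξ0 : ξ ≠ 0 := by
          intro h
          apply Hcd
          have hα0 : α = 0 := by
            rcases hξ with h' | h'
            · rw [← h', h]
              ring
            · have : -α = 0 := by rw [← h', h]; ring
              linear_combination -this
          rw [hα0] at heq
          refine ⟨(d:ZMod p)*β, by linear_combination ((d:ZMod p))*heq⟩
        obtain ⟨x₀, hx₀⟩ := ZMod.intCast_surjective ξ
        obtain ⟨y₀, hy₀⟩ := ZMod.intCast_surjective β
        have hpx : ¬(p:ℤ) ∣ x₀ := fun h => hξ0 (by rw [← hx₀]; exact (castdvd x₀).mpr h)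
        have hpy : ¬(p:ℤ) ∣ y₀ := fun h => hβ0 (by rw [← hy₀]; exact (castdvd y₀).mpr h)
        have h1 : (p:ℤ) ∣ d * y₀^2 - (a * x₀^4 + c) := by
          rw [← castdvd]
          push_cast
          rw [hx₀, hy₀, hξ4]
          linear_combination -heq
        obtain ⟨z, hz1, hz2⟩ := hensel_sq hp hodd d (a*x₀^4 + c) y₀ hpd hpy h1 K
        refine ⟨x₀^2, x₀, 1, z, by simp, ?_, ?_⟩
        · rw [Int.modEq_iff_dvd]
          convert hz2 using 1
          ring
        · simp [Int.ModEq]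
end

section
/- Let a, c, d be nonzero integers. If the system a·U² + c·W² = d·Z², U·W = V² has a strong solution modulo 2⁴ = 16, then it has a strong solution modulo 2^k for all k ≥ 1. -/
/-- choose `δ ∈ {0,1,2,3}` fixing the second congruence -/
private lemma choose_delta (c₀ v P : ℤ) (hv : v % 2 = 1) :
    (4:ℤ) ∣ c₀ ∨ (4:ℤ) ∣ (c₀ - v - 2*P) ∨ (4:ℤ) ∣ (c₀ - 2*v - 8*P) ∨ (4:ℤ) ∣ (c₀ - 3*v - 18*P) := by
  rcases Int.emod_two_eq P with hP | hP <;>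
    rcases (by omega : v % 4 = 1 ∨ v % 4 = 3) with h|h <;>
      rcases (by omega : c₀ % 4 = 0 ∨ c₀ % 4 = 1 ∨ c₀ % 4 = 2 ∨ c₀ % 4 = 3) with h'|h'|h'|h' <;>
        omega

/-- Lifting step in the case where `a*u` is odd. -/
private lemma stepA (a c d P u v w z : ℤ) (hau : ¬ (2:ℤ) ∣ a * u)
    (h1 : 16*P ∣ a*u^2 + c*w^2 - d*z^2) (h2 : 16*P ∣ u*w - v^2) :
    ∃ u' v' w', (32*P ∣ a*u'^2 + c*w'^2 - d*z^2) ∧ (32*P ∣ u'*w' - v'^2) ∧ ¬ (2:ℤ) ∣ a*u' := by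
  obtain ⟨t, ht⟩ := h1
  obtain ⟨m, hm⟩ := h2
  have hoa : Odd a := by
    rcases Int.even_or_odd a with h | h
    · exact absurd ((h.two_dvd).mul_right u) hau
    · exact h
  have hou : Odd u := by
    rcases Int.even_or_odd u with h | h
    · exact absurd ((h.two_dvd).mul_left a) hau
    · exact h
  obtain ⟨α, hα⟩ := hoa
  obtain ⟨β, hβ⟩ := hou
  have he : 1 + a*u = 2*(2*α*β+α+β+1) := by rw [hα, hβ]; ring
  have hodd' : ¬ (2:ℤ) ∣ a*(u + 8*P*t) := by
    intro ⟨q, hq⟩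
    exact hau ⟨q - 4*a*P*t, by linear_combination hq⟩
  rcases Int.even_or_odd w with hew | how
  · obtain ⟨w₁, hw⟩ := hew
    refine ⟨u + 8*P*t, v, w + 16*P*(m + t*w₁),
      ⟨t*(2*α*β+α+β+1) + 2*a*P*t^2 + c*w*(m+t*w₁) + 8*P*c*(m+t*w₁)^2,
        by linear_combination ht + 16*P*t*he⟩,
      ⟨(m+t*w₁)*(β+1) + 4*P*t*(m+t*w₁),
        by linear_combination hm + 8*P*t*hw + 16*P*(m+t*w₁)*hβ⟩,
      hodd'⟩
  · -- w odd, hence v odd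
    obtain ⟨γ, hγ⟩ := how
    have hov : Odd v := by
      rcases Int.even_or_odd v with hev | h
      · obtain ⟨v₁, hv⟩ := hev
        exfalso
        have : (1:ℤ) = 2*(8*P*m + 2*v₁^2 - 2*β*γ - β - γ) := by
          linear_combination hm - w*hβ - (2*β+1)*hγ + (v+2*v₁)*hv
        omega
      · exact h
    have hv2 : v % 2 = 1 := Int.odd_iff.mp hov
    have hδ : ∃ δ q : ℤ, 2*m + t*w - v*δ - 2*P*δ^2 = 4*q := by
      rcases choose_delta (2*m + t*w) v P hv2 with ⟨q, hq⟩ | ⟨q, hq⟩ | ⟨q, hq⟩ | ⟨q, hq⟩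
      · exact ⟨0, q, by linear_combination hq⟩
      · exact ⟨1, q, by linear_combination hq⟩
      · exact ⟨2, q, by linear_combination hq⟩
      · exact ⟨3, q, by linear_combination hq⟩
    obtain ⟨δ, q, hq⟩ := hδ
    exact ⟨u + 8*P*t, v + 4*P*δ, w,
      ⟨t*(2*α*β+α+β+1) + 2*a*P*t^2, by linear_combination ht + 16*P*t*he⟩,
      ⟨q, by linear_combination hm + 8*P*hq⟩,
      hodd'⟩

/-- Full lifting step. -/
private lemma step (a c d P u v w z : ℤ)
    (h1 : 16*P ∣ a*u^2 + c*w^2 - d*z^2) (h2 : 16*P ∣ u*w - v^2)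
    (hodd : ¬ (2:ℤ) ∣ a*u ∨ ¬ (2:ℤ) ∣ c*w ∨ ¬ (2:ℤ) ∣ d*z) :
    ∃ u' v' w' z', (32*P ∣ a*u'^2 + c*w'^2 - d*z'^2) ∧ (32*P ∣ u'*w' - v'^2) ∧
      (¬ (2:ℤ) ∣ a*u' ∨ ¬ (2:ℤ) ∣ c*w' ∨ ¬ (2:ℤ) ∣ d*z') := by
  have hAB : ¬ (2:ℤ) ∣ a*u ∨ ¬ (2:ℤ) ∣ c*w := by
    by_contra hcon
    push_neg at hcon
    obtain ⟨hA, hC⟩ := hcon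
    have hdz : ¬ (2:ℤ) ∣ d*z := by
      rcases hodd with h|h|h
      · exact absurd hA h
      · exact absurd hC h
      · exact h
    have h2' : (2:ℤ) ∣ a*u^2 + c*w^2 - d*z^2 := dvd_trans ⟨8*P, by ring⟩ h1
    have hA2 : (2:ℤ) ∣ a*u^2 := by
      have := hA.mul_right u; rwa [show a*u*u = a*u^2 by ring] at this
    have hC2 : (2:ℤ) ∣ c*w^2 := by
      have := hC.mul_right w; rwa [show c*w*w = c*w^2 by ring] at this
    have hdz2 : (2:ℤ) ∣ (d*z)*z := by
      have := dvd_sub (dvd_add hA2 hC2) h2'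
      rwa [show a*u^2 + c*w^2 - (a*u^2 + c*w^2 - d*z^2) = d*z*z by ring] at this
    rcases (Int.prime_two).dvd_mul.mp hdz2 with h | h
    · exact hdz h
    · exact hdz (h.mul_left d)
  rcases hAB with hA | hB
  · obtain ⟨u', v', w', e1, e2, e3⟩ := stepA a c d P u v w z hA h1 h2
    exact ⟨u', v', w', z, e1, e2, Or.inl e3⟩
  · obtain ⟨w', v', u', e1, e2, e3⟩ := stepA c a d P w v u z hB
      (by rwa [show c*w^2 + a*u^2 - d*z^2 = a*u^2 + c*w^2 - d*z^2 by ring])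
      (by rwa [show w*u - v^2 = u*w - v^2 by ring])
    refine ⟨u', v', w', z, ?_, ?_, Or.inr (Or.inl e3)⟩
    · rwa [show a*u'^2 + c*w'^2 - d*z^2 = c*w'^2 + a*u'^2 - d*z^2 by ring]
    · rwa [show u'*w' - v'^2 = w'*u' - v'^2 by ring]

/-- Normalization: divide out the (odd) gcd to obtain a strong solution. -/
private lemma normSol (a c d N u v w z : ℤ) (hN : ∃ n : ℕ, N = 2^n)
    (h1 : N ∣ a*u^2 + c*w^2 - d*z^2) (h2 : N ∣ u*w - v^2)
    (hodd : ¬ (2:ℤ) ∣ a*u ∨ ¬ (2:ℤ) ∣ c*w ∨ ¬ (2:ℤ) ∣ d*z) :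
    ∃ u' v' w' z', StrongSolution a c d 2 N u' v' w' z' := by
  obtain ⟨n, rfl⟩ := hN
  set g : ℕ := Int.gcd u (Int.gcd v (Int.gcd w z)) with hgdef
  have hdu : (g:ℤ) ∣ u := Int.gcd_dvd_left _ _
  have hdvwz : (g:ℤ) ∣ ((Int.gcd v (Int.gcd w z) : ℕ) : ℤ) := Int.gcd_dvd_right _ _
  have hdv : (g:ℤ) ∣ v := hdvwz.trans (Int.gcd_dvd_left _ _)
  have hdwz : (g:ℤ) ∣ ((Int.gcd w z : ℕ) : ℤ) := hdvwz.trans (Int.gcd_dvd_right _ _)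
  have hdw : (g:ℤ) ∣ w := hdwz.trans (Int.gcd_dvd_left _ _)
  have hdz : (g:ℤ) ∣ z := hdwz.trans (Int.gcd_dvd_right _ _)
  have hg2 : ¬ (2:ℤ) ∣ (g:ℤ) := by
    rcases hodd with h|h|h
    · exact fun h2 => h ((h2.trans hdu).mul_left a)
    · exact fun h2 => h ((h2.trans hdw).mul_left c)
    · exact fun h2 => h ((h2.trans hdz).mul_left d)
  have hgpos : 0 < g := by
    rcases Nat.eq_zero_or_pos g with h | h
    · exact absurd (by rw [h]; exact dvd_zero 2) hg2
    · exact h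
  have hu : u = (g:ℤ) * (u / g) := (Int.mul_ediv_cancel' hdu).symm
  have hv : v = (g:ℤ) * (v / g) := (Int.mul_ediv_cancel' hdv).symm
  have hw : w = (g:ℤ) * (w / g) := (Int.mul_ediv_cancel' hdw).symm
  have hz : z = (g:ℤ) * (z / g) := (Int.mul_ediv_cancel' hdz).symm
  set u' := u / (g:ℤ) with hu'def
  set v' := v / (g:ℤ) with hv'def
  set w' := w / (g:ℤ) with hw'def
  set z' := z / (g:ℤ) with hz'def
  have hg2n : ¬ 2 ∣ g := by
    intro h2; exact hg2 (by exact_mod_cast Int.natCast_dvd_natCast.mpr h2)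
  have hcop2 : IsCoprime (2:ℤ) (g:ℤ) := by
    rw [Int.isCoprime_iff_gcd_eq_one]
    have : Int.gcd (2:ℤ) (g:ℤ) = Nat.gcd 2 g := by
      rw [show ((2:ℤ)) = ((2:ℕ):ℤ) by norm_num]
      exact Int.gcd_natCast_natCast 2 g
    rw [this]
    exact (Nat.Prime.coprime_iff_not_dvd Nat.prime_two).2 hg2n
  have hcop : IsCoprime ((2:ℤ)^n) ((g:ℤ)^2) := IsCoprime.pow hcop2
  have k1 : (2:ℤ)^n ∣ a*u'^2 + c*w'^2 - d*z'^2 := by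
    apply hcop.dvd_of_dvd_mul_left
    have heq : a*u^2 + c*w^2 - d*z^2 = (g:ℤ)^2 * (a*u'^2 + c*w'^2 - d*z'^2) := by
      rw [hu, hw, hz]; ring
    rwa [heq] at h1
  have k2 : (2:ℤ)^n ∣ u'*w' - v'^2 := by
    apply hcop.dvd_of_dvd_mul_left
    have heq : u*w - v^2 = (g:ℤ)^2 * (u'*w' - v'^2) := by
      rw [hu, hv, hw]; ring
    rwa [heq] at h2
  refine ⟨u', v', w', z', ?_, ?_, ?_, ?_⟩
  · -- gcd = 1
    have e1 : Int.gcd w z = g * Int.gcd w' z' := by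
      conv_lhs => rw [hw, hz]
      rw [Int.gcd_mul_left]
      simp
    have e2 : Int.gcd v ((Int.gcd w z : ℕ) : ℤ) = g * Int.gcd v' ((Int.gcd w' z' : ℕ) : ℤ) := by
      conv_lhs => rw [hv, e1]
      rw [show (((g * Int.gcd w' z' : ℕ)) : ℤ) = (g:ℤ) * ((Int.gcd w' z' : ℕ) : ℤ) by push_cast; ring]
      rw [Int.gcd_mul_left]
      simp
    have e3 : g = g * Int.gcd u' ((Int.gcd v' ((Int.gcd w' z' : ℕ) : ℤ) : ℕ) : ℤ) := by
      conv_lhs => rw [hgdef]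
      conv_lhs => rw [hu, e2]
      rw [show (((g * Int.gcd v' ((Int.gcd w' z' : ℕ) : ℤ) : ℕ)) : ℤ) =
        (g:ℤ) * ((Int.gcd v' ((Int.gcd w' z' : ℕ) : ℤ) : ℕ) : ℤ) by push_cast; ring]
      rw [Int.gcd_mul_left]
      simp
    exact (Nat.eq_of_mul_eq_mul_left hgpos (e3.symm.trans (mul_one g).symm))
  · refine Int.modEq_iff_dvd.mpr ?_
    obtain ⟨q, hq⟩ := k1
    exact ⟨-q, by linarith⟩
  · refine Int.modEq_iff_dvd.mpr ?_
    obtain ⟨q, hq⟩ := k2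
    exact ⟨-q, by linarith⟩
  · have cast2 : (((2:ℕ)):ℤ) = (2:ℤ) := by norm_num
    rcases hodd with h|h|h
    · refine Or.inl ?_
      rw [cast2]
      intro ⟨q, hq⟩
      exact h ⟨q * g, by rw [hu]; linear_combination (g:ℤ)*hq⟩
    · refine Or.inr (Or.inl ?_)
      rw [cast2]
      intro ⟨q, hq⟩
      exact h ⟨q * g, by rw [hw]; linear_combination (g:ℤ)*hq⟩
    · refine Or.inr (Or.inr ?_)
      rw [cast2]
      intro ⟨q, hq⟩
      exact h ⟨q * g, by rw [hz]; linear_combination (g:ℤ)*hq⟩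

theorem stmt11 (a c d : ℤ) (ha : a ≠ 0) (hc : c ≠ 0) (hd : d ≠ 0)
    (h : ∃ u v w z : ℤ, StrongSolution a c d 2 16 u v w z) :
    ∀ k : ℕ, 1 ≤ k → ∃ u v w z : ℤ, StrongSolution a c d 2 (2 ^ k) u v w z := by
  obtain ⟨u, v, w, z, hgcd, m1, m2, ho⟩ := h
  have ho' : ¬ (2:ℤ) ∣ a*u ∨ ¬ (2:ℤ) ∣ c*w ∨ ¬ (2:ℤ) ∣ d*z := by
    have cast2 : (((2:ℕ)):ℤ) = (2:ℤ) := by norm_num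
    rwa [cast2] at ho
  have d1 : (16:ℤ) ∣ a*u^2 + c*w^2 - d*z^2 := by
    obtain ⟨q, hq⟩ := m1.dvd
    exact ⟨-q, by linarith⟩
  have d2 : (16:ℤ) ∣ u*w - v^2 := by
    obtain ⟨q, hq⟩ := m2.dvd
    exact ⟨-q, by linarith⟩
  have claim : ∀ j : ℕ, ∃ u v w z : ℤ,
      ((2:ℤ)^(j+4) ∣ a*u^2 + c*w^2 - d*z^2) ∧ ((2:ℤ)^(j+4) ∣ u*w - v^2) ∧
      (¬ (2:ℤ) ∣ a*u ∨ ¬ (2:ℤ) ∣ c*w ∨ ¬ (2:ℤ) ∣ d*z) := by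
    intro j
    induction j with
    | zero => exact ⟨u, v, w, z, by norm_num [d1], by norm_num [d2], ho'⟩
    | succ j ih =>
      obtain ⟨u₀, v₀, w₀, z₀, i1, i2, i3⟩ := ih
      have e1 : (2:ℤ)^(j+4) = 16*2^j := by rw [pow_add]; ring
      have e2 : (2:ℤ)^(j+1+4) = 32*2^j := by
        rw [show j+1+4 = j+5 by omega, pow_add]; ring
      rw [e1] at i1 i2
      obtain ⟨u₁, v₁, w₁, z₁, j1, j2, j3⟩ := step a c d (2^j) u₀ v₀ w₀ z₀ i1 i2 i3
      exact ⟨u₁, v₁, w₁, z₁, by rw [e2]; exact j1, by rw [e2]; exact j2, j3⟩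
  intro k hk
  rcases le_or_gt k 4 with h4 | h4
  · have hdvd : (2:ℤ)^k ∣ (2:ℤ)^4 := pow_dvd_pow 2 h4
    have h16 : ((2:ℤ)^4) = 16 := by norm_num
    exact normSol a c d (2^k) u v w z ⟨k, rfl⟩
      (hdvd.trans (h16 ▸ d1)) (hdvd.trans (h16 ▸ d2)) ho'
  · obtain ⟨u₀, v₀, w₀, z₀, i1, i2, i3⟩ := claim (k - 4)
    rw [show k - 4 + 4 = k by omega] at i1 i2
    exact normSol a c d (2^k) u₀ v₀ w₀ z₀ ⟨k, rfl⟩ i1 i2 i3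
end

section
/- Let p be a prime, k ≥ 2, and a, c, d integers with p² ∤ a·c·d. Then every primitive solution modulo p^k of the system a·U² + c·W² = d·Z², U·W = V² is a strong solution: at least one of a·u, c·w, d·z is not divisible by p. -/
lemma helper12 (q x y : ℤ) (hq : Prime q) (h1 : q ∣ x) (h2 : ¬ q ^ 2 ∣ x)
    (h3 : q ^ 2 ∣ x * y ^ 2) : q ∣ y := by
  obtain ⟨x₀, rfl⟩ := h1
  have hne : q ≠ 0 := hq.ne_zero
  have h4 : q ∣ x₀ * y ^ 2 := by
    have h5 : q * q ∣ q * (x₀ * y ^ 2) := by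
      rw [← mul_assoc, ← pow_two]; exact h3
    exact (mul_dvd_mul_iff_left hne).mp h5
  rcases hq.dvd_mul.mp h4 with h | h
  · exact absurd (by rw [pow_two]; exact mul_dvd_mul_left q h) h2
  · exact hq.dvd_of_dvd_pow h

theorem stmt12 (p : ℕ) (hp : p.Prime) (k : ℕ) (hk : 2 ≤ k) (a c d : ℤ)
    (h2 : ¬ (p : ℤ) ^ 2 ∣ a * c * d) (u v w z : ℤ)
    (hprim : Int.gcd u (Int.gcd v (Int.gcd w z)) = 1)
    (h1 : a * u ^ 2 + c * w ^ 2 ≡ d * z ^ 2 [ZMOD ((p : ℤ) ^ k)])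
    (huv : u * w ≡ v ^ 2 [ZMOD ((p : ℤ) ^ k)]) :
    ¬ (p : ℤ) ∣ a * u ∨ ¬ (p : ℤ) ∣ c * w ∨ ¬ (p : ℤ) ∣ d * z := by
  by_contra h
  push_neg at h
  obtain ⟨hau, hcw, hdz⟩ := h
  set q : ℤ := (p : ℤ) with hq
  have hqp : Prime q := Nat.prime_iff_prime_int.mp hp
  have hk2 : q ^ 2 ∣ q ^ k := pow_dvd_pow q hk
  have h1' : q ^ 2 ∣ d * z ^ 2 - (a * u ^ 2 + c * w ^ 2) := (h1.of_dvd hk2).dvd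
  have huv' : q ^ 2 ∣ v ^ 2 - u * w := (huv.of_dvd hk2).dvd
  have hna : ¬ q ^ 2 ∣ a := fun h' => h2 (by rw [mul_assoc]; exact dvd_mul_of_dvd_left h' _)
  have hnc : ¬ q ^ 2 ∣ c := fun h' =>
    h2 (by rw [show a * c * d = c * (a * d) by ring]; exact dvd_mul_of_dvd_left h' _)
  have hnd : ¬ q ^ 2 ∣ d := fun h' => h2 (dvd_mul_of_dvd_right h' _)
  have key : q ∣ u → q ∣ w → q ∣ z → False := by
    intro hu hw hz
    have hv2 : q ^ 2 ∣ v ^ 2 := by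
      have e : v ^ 2 = (v ^ 2 - u * w) + u * w := by ring
      rw [e]
      exact dvd_add huv' (by rw [pow_two]; exact mul_dvd_mul hu hw)
    have hv : q ∣ v := hqp.dvd_of_dvd_pow ((dvd_pow_self q two_ne_zero).trans hv2)
    have hg : q ∣ (Int.gcd u (Int.gcd v (Int.gcd w z)) : ℤ) :=
      Int.dvd_coe_gcd hu (Int.dvd_coe_gcd hv (Int.dvd_coe_gcd hw hz))
    rw [hprim] at hg
    exact hqp.not_dvd_one (by exact_mod_cast hg)
  rcases hqp.dvd_mul.mp hau with ha | hu <;>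
  rcases hqp.dvd_mul.mp hcw with hc | hw <;>
  rcases hqp.dvd_mul.mp hdz with hd | hz
  · exact h2 ((by rw [pow_two]; exact mul_dvd_mul ha hc : q ^ 2 ∣ a * c).trans
      (dvd_mul_right (a * c) d))
  · exact h2 ((by rw [pow_two]; exact mul_dvd_mul ha hc : q ^ 2 ∣ a * c).trans
      (dvd_mul_right (a * c) d))
  · exact h2 ((by rw [pow_two]; exact mul_dvd_mul ha hd : q ^ 2 ∣ a * d).trans
      ⟨c, by ring⟩)
  · -- ha, hw, hz : need q ∣ u
    have hau2 : q ^ 2 ∣ a * u ^ 2 := by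
      have e : a * u ^ 2 = d * z ^ 2 - c * w ^ 2 - (d * z ^ 2 - (a * u ^ 2 + c * w ^ 2)) := by
        ring
      rw [e]
      exact dvd_sub (dvd_sub (dvd_mul_of_dvd_right (pow_dvd_pow_of_dvd hz 2) d)
        (dvd_mul_of_dvd_right (pow_dvd_pow_of_dvd hw 2) c)) h1'
    exact key (helper12 q a u hqp ha hna hau2) hw hz
  · exact h2 ((by rw [pow_two]; exact mul_dvd_mul hc hd : q ^ 2 ∣ c * d).trans
      ⟨a, by ring⟩)
  · -- hc, hu, hz : need q ∣ w
    have hcw2 : q ^ 2 ∣ c * w ^ 2 := by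
      have e : c * w ^ 2 = d * z ^ 2 - a * u ^ 2 - (d * z ^ 2 - (a * u ^ 2 + c * w ^ 2)) := by
        ring
      rw [e]
      exact dvd_sub (dvd_sub (dvd_mul_of_dvd_right (pow_dvd_pow_of_dvd hz 2) d)
        (dvd_mul_of_dvd_right (pow_dvd_pow_of_dvd hu 2) a)) h1'
    exact key hu (helper12 q c w hqp hc hnc hcw2) hz
  · -- hd, hu, hw : need q ∣ z
    have hdz2 : q ^ 2 ∣ d * z ^ 2 := by
      have e : d * z ^ 2 = (a * u ^ 2 + c * w ^ 2) + (d * z ^ 2 - (a * u ^ 2 + c * w ^ 2)) := by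
        ring
      rw [e]
      exact dvd_add (dvd_add (dvd_mul_of_dvd_right (pow_dvd_pow_of_dvd hu 2) a)
        (dvd_mul_of_dvd_right (pow_dvd_pow_of_dvd hw 2) c)) h1'
    exact key hu hw (helper12 q d z hqp hd hnd hdz2)
  · exact key hu hw hz
end

section
/- Let d be a nonzero square-free integer and q a prime with q ≡ 1 (mod 8) and q ∤ d. If the system U² − q·W² = d·Z², U·W = V² has a nontrivial integer solution, then d is a fourth power modulo q. -/
lemma descent13 (q : ℕ) (hq : q.Prime) (e : ℤ) (hqe : ¬ (q:ℤ) ∣ e) :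
    ∀ n : ℕ, ∀ w z : ℤ, z.natAbs = n → (q:ℤ) * w ^ 2 = e * z ^ 2 → z = 0 := by
  have hp : Prime (q:ℤ) := Nat.prime_iff_prime_int.mp hq
  intro n
  induction n using Nat.strong_induction_on with
  | _ n ih =>
    intro w z hn heq
    by_contra hz
    have hqz : (q:ℤ) ∣ z := by
      have h1 : (q:ℤ) ∣ e * z^2 := ⟨w^2, heq.symm⟩
      have h2 : (q:ℤ) ∣ z^2 := ((hp.dvd_mul).mp h1).resolve_left hqe
      exact hp.dvd_of_dvd_pow h2
    obtain ⟨z1, rfl⟩ := hqz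
    have hq0 : (q:ℤ) ≠ 0 := by exact_mod_cast hq.ne_zero
    have heq2 : w ^ 2 = e * ((q:ℤ) * z1 ^ 2) := by
      have : (q:ℤ) * w ^ 2 = (q:ℤ) * (e * ((q:ℤ) * z1 ^ 2)) := by ring_nf; ring_nf at heq; linarith [heq]
      exact mul_left_cancel₀ hq0 this
    have hqw : (q:ℤ) ∣ w := by
      refine hp.dvd_of_dvd_pow (n := 2) ?_
      exact ⟨e * z1 ^ 2, by linarith [heq2]⟩
    obtain ⟨w1, rfl⟩ := hqw
    have heq3 : (q:ℤ) * w1 ^ 2 = e * z1 ^ 2 := by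
      have : (q:ℤ) * ((q:ℤ) * w1 ^ 2) = (q:ℤ) * (e * z1 ^ 2) := by ring_nf; ring_nf at heq2; linarith [heq2]
      exact mul_left_cancel₀ hq0 this
    have hz1 : z1 ≠ 0 := fun h => hz (by simp [h])
    have hlt : z1.natAbs < n := by
      subst hn
      have : ((q:ℤ)*z1).natAbs = q * z1.natAbs := by
        rw [Int.natAbs_mul, Int.natAbs_natCast]
      rw [this]
      have h2 : 2 ≤ q := hq.two_le
      have : 0 < z1.natAbs := Int.natAbs_pos.mpr hz1
      nlinarith
    exact hz (by simp [ih z1.natAbs hlt w1 z1 rfl heq3])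


lemma sqf_dvd13 {d s b : ℤ} (hsf : Squarefree d) (hb : b ≠ 0) (h : s ^ 2 ∣ d * b ^ 2) :
    s ∣ b := by
  have hd : d ≠ 0 := hsf.ne_zero
  rcases eq_or_ne s 0 with rfl | hs
  · exfalso
    have : d * b ^ 2 = 0 := by simpa using h
    exact (mul_ne_zero hd (pow_ne_zero 2 hb)) this
  rw [← Int.natAbs_dvd_natAbs]
  rw [← Int.natAbs_dvd_natAbs, Int.natAbs_mul, Int.natAbs_pow, Int.natAbs_pow] at h
  have hsf' : Squarefree d.natAbs := Int.squarefree_natAbs.mpr hsf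
  set S := s.natAbs; set B := b.natAbs; set D := d.natAbs
  have hS : S ≠ 0 := Int.natAbs_ne_zero.mpr hs
  have hB : B ≠ 0 := Int.natAbs_ne_zero.mpr hb
  have hD : D ≠ 0 := Int.natAbs_ne_zero.mpr hd
  rw [← Nat.factorization_le_iff_dvd hS hB]
  intro p
  have hfac := (Nat.factorization_le_iff_dvd (pow_ne_zero 2 hS) (mul_ne_zero hD (pow_ne_zero 2 hB))).mpr h p
  rw [Nat.factorization_pow, Nat.factorization_mul hD (pow_ne_zero 2 hB), Nat.factorization_pow] at hfac
  simp only [Finsupp.coe_add, Finsupp.coe_smul, Pi.add_apply, Pi.smul_apply, smul_eq_mul] at hfac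
  have hd1 : D.factorization p ≤ 1 := (Nat.squarefree_iff_factorization_le_one hD).mp hsf' p
  omega


lemma legendre_prod13 (q : ℕ) [Fact q.Prime] :
    ∀ n : ℕ, n ≠ 0 → (∀ p : ℕ, p.Prime → p ∣ n → legendreSym q (p:ℤ) = 1) →
    legendreSym q (n:ℤ) = 1 := by
  intro n
  induction n using Nat.strong_induction_on with
  | _ n ih =>
    intro hn hall
    rcases eq_or_ne n 1 with rfl | h1
    · simpa using legendreSym.sq_one' (p := q) (a := 1) (by simp)
    · have pp := Nat.minFac_prime h1
      set p := n.minFac with hp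
      have hdvd : p ∣ n := n.minFac_dvd
      obtain ⟨m, hm⟩ := hdvd
      have hm0 : m ≠ 0 := by rintro rfl; simp at hm; exact hn hm
      have hmlt : m < n := by
        rw [hm]
        have : 2 ≤ p := pp.two_le
        nlinarith [Nat.pos_of_ne_zero hm0]
      have h2 : legendreSym q (m:ℤ) = 1 := by
        refine ih m hmlt hm0 (fun r hr hrm => hall r hr ?_)
        exact hm ▸ Dvd.dvd.mul_left hrm p
      have h3 : legendreSym q (p:ℤ) = 1 := hall p pp ⟨m, hm⟩
      rw [hm]
      push_cast
      rw [legendreSym.mul, h2, h3, mul_one]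

theorem stmt13 (d : ℤ) (hd : d ≠ 0) (hsf : Squarefree d) (q : ℕ) (hq : q.Prime)
    (hq8 : q ≡ 1 [MOD 8]) (hqd : ¬ (q : ℤ) ∣ d)
    (h : ∃ u v w z : ℤ, ¬(u = 0 ∧ v = 0 ∧ w = 0 ∧ z = 0) ∧
      u ^ 2 - q * w ^ 2 = d * z ^ 2 ∧ u * w = v ^ 2) :
    ∃ m : ℤ, m ^ 4 ≡ d [ZMOD (q : ℤ)] := by
  obtain ⟨u, v, w, z, hnt, heq1, heq2⟩ := h
  haveI : Fact q.Prime := ⟨hq⟩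
  have hq0 : (q:ℤ) ≠ 0 := by exact_mod_cast hq.ne_zero
  have hq81 : q % 8 = 1 := by
    have := hq8; unfold Nat.ModEq at this; omega
  have hq2 : q ≠ 2 := by omega
  have hq41 : q % 4 = 1 := by
    have := Nat.mod_mod_of_dvd q (by norm_num : 4 ∣ 8); omega
  by_cases hw : w = 0
  · -- degenerate: w = 0, forces d = 1
    subst hw
    have hv : v = 0 := by
      have : v ^ 2 = 0 := by rw [← heq2]; ring
      exact pow_eq_zero_iff (by norm_num) |>.mp this
    have hu2 : u ^ 2 = d * z ^ 2 := by linarith [heq1]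
    have hz : z ≠ 0 := by
      rintro rfl
      have : u = 0 := by
        have : u ^ 2 = 0 := by simpa using hu2
        exact pow_eq_zero_iff (by norm_num) |>.mp this
      exact hnt ⟨this, hv, rfl, rfl⟩
    have hzu : z ∣ u := by
      rw [← Int.pow_dvd_pow_iff (two_ne_zero)]
      exact ⟨d, by linarith [hu2]⟩
    obtain ⟨k, rfl⟩ := hzu
    have hk2 : k ^ 2 = d := by
      have h2 : z ^ 2 * k ^ 2 = z ^ 2 * d := by ring_nf; ring_nf at hu2; linarith [hu2]
      exact mul_left_cancel₀ (pow_ne_zero 2 hz) h2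
    have hunit : IsUnit k := hsf k (by rw [← hk2]; exact ⟨1, by ring⟩)
    have hd1 : d = 1 := by
      rcases Int.isUnit_iff.mp hunit with rfl | rfl <;> simp [← hk2]
    exact ⟨1, by rw [hd1]; rfl⟩
  · -- main case
    have hqone : ¬ (q:ℤ) ∣ (1:ℤ) := by
      intro hdvd
      have h1 : (q:ℤ) ≤ 1 := Int.le_of_dvd one_pos hdvd
      have := hq.two_le; omega
    have hz : z ≠ 0 := by
      rintro rfl
      have h1 : (q:ℤ) * w ^ 2 = 1 * u ^ 2 := by linarith [heq1]
      have hu0 : u = 0 := descent13 q hq 1 hqone u.natAbs w u rfl h1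
      have hw0 : w = 0 := by
        rw [hu0] at h1
        have : w ^ 2 = 0 := by
          have := mul_eq_zero.mp (by linarith [h1] : (q:ℤ) * w ^ 2 = 0)
          tauto
        exact pow_eq_zero_iff (two_ne_zero) |>.mp this
      exact hw hw0
    have hu : u ≠ 0 := by
      rintro rfl
      have h1 : (q:ℤ) * w ^ 2 = (-d) * z ^ 2 := by linarith [heq1]
      have : z = 0 := descent13 q hq (-d) (by simpa using hqd) z.natAbs w z rfl h1
      exact hz this
    have hv : v ≠ 0 := by
      intro hv0
      rw [hv0] at heq2
      have h0 : u * w = 0 := by rw [heq2]; ring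
      rcases mul_eq_zero.mp h0 with h1 | h1
      exacts [hu h1, hw h1]
    -- key equation
    have hkey : v ^ 4 - (q:ℤ) * w ^ 4 = d * (z * w) ^ 2 := by
      have h4 : v ^ 4 = (u * w) ^ 2 := by rw [heq2]; ring
      nlinarith [heq1, h4]
    set g : ℤ := (Int.gcd v w : ℤ) with hgdef
    have hgpos : 0 < Int.gcd v w := Int.gcd_pos_of_ne_zero_left w hv
    have hg0 : g ≠ 0 := by positivity
    set a : ℤ := v / g with hadef
    set c : ℤ := w / g with hcdef
    have hva : v = g * a := (Int.mul_ediv_cancel' (Int.gcd_dvd_left v w)).symm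
    have hwc : w = g * c := (Int.mul_ediv_cancel' (Int.gcd_dvd_right v w)).symm
    have hcop : Int.gcd a c = 1 := Int.gcd_div_gcd_div_gcd hgpos
    have hcopr : IsCoprime a c := Int.isCoprime_iff_gcd_eq_one.mpr hcop
    have ha0 : a ≠ 0 := fun h0 => hv (by rw [hva, h0, mul_zero])
    have hc0 : c ≠ 0 := fun h0 => hw (by rw [hwc, h0, mul_zero])
    -- divide by g^4
    have hdvd4 : (g ^ 2) ^ 2 ∣ d * (z * w) ^ 2 := by
      rw [← hkey]
      refine dvd_sub ?_ ?_
      · exact ⟨a ^ 4, by rw [hva]; ring⟩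
      · exact ⟨(q:ℤ) * c ^ 4, by rw [hwc]; ring⟩
    have hgzw : g ^ 2 ∣ z * w := sqf_dvd13 hsf (mul_ne_zero hz hw) hdvd4
    obtain ⟨b, hb⟩ := hgzw
    have hb0 : b ≠ 0 := by
      rintro rfl
      rw [mul_zero] at hb
      exact (mul_ne_zero hz hw) hb
    have heqn : a ^ 4 - (q:ℤ) * c ^ 4 = d * b ^ 2 := by
      have h1 : g ^ 4 * (a ^ 4 - (q:ℤ) * c ^ 4) = g ^ 4 * (d * b ^ 2) := by
        have e1 : v ^ 4 = g ^ 4 * a ^ 4 := by rw [hva]; ring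
        have e2 : w ^ 4 = g ^ 4 * c ^ 4 := by rw [hwc]; ring
        have e3 : (z * w) ^ 2 = g ^ 4 * b ^ 2 := by rw [hb]; ring
        rw [e1, e2, e3] at hkey
        linear_combination hkey
      exact mul_left_cancel₀ (pow_ne_zero 4 hg0) h1
    -- q does not divide a
    have hqZ : Prime (q:ℤ) := Nat.prime_iff_prime_int.mp hq
    have hqa : ¬ (q:ℤ) ∣ a := by
      intro hqa
      have hqb : (q:ℤ) ∣ b := by
        have h1 : (q:ℤ) ∣ d * b ^ 2 := by
          rw [← heqn]
          exact dvd_sub (dvd_pow hqa (by norm_num)) (Dvd.dvd.mul_right (dvd_refl _) _)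
        have h2 : (q:ℤ) ∣ b ^ 2 := (hqZ.dvd_mul.mp h1).resolve_left hqd
        exact hqZ.dvd_of_dvd_pow h2
      have hqc : (q:ℤ) ∣ c := by
        obtain ⟨a1, ha1⟩ := hqa
        obtain ⟨b1, hb1⟩ := hqb
        have hn2 := heqn
        rw [ha1, hb1] at hn2
        have h1 : (q:ℤ) * ((q:ℤ) ^ 3 * a1 ^ 4 - c ^ 4) = (q:ℤ) * ((q:ℤ) * (d * b1 ^ 2)) := by
          linear_combination hn2
        have h2 := mul_left_cancel₀ hq0 h1
        have h3 : (q:ℤ) ∣ c ^ 4 := ⟨(q:ℤ) ^ 2 * a1 ^ 4 - d * b1 ^ 2, by linear_combination -h2⟩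
        exact hqZ.dvd_of_dvd_pow h3
      exact hqZ.not_unit (hcopr.isUnit_of_dvd' hqa hqc)
    have hqb : ¬ (q:ℤ) ∣ b := by
      intro hqb
      apply hqa
      have h1 : (q:ℤ) ∣ a ^ 4 := by
        have : a ^ 4 = (q:ℤ) * c ^ 4 + d * b ^ 2 := by linarith [heqn]
        rw [this]
        exact dvd_add (Dvd.dvd.mul_right (dvd_refl _) _) (Dvd.dvd.mul_left (dvd_pow hqb (by norm_num)) _)
      exact hqZ.dvd_of_dvd_pow h1
    -- every prime factor p of b satisfies legendreSym q p = 1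
    have hprime : ∀ p : ℕ, p.Prime → p ∣ b.natAbs → legendreSym q (p:ℤ) = 1 := by
      intro p pp hpb
      haveI : Fact p.Prime := ⟨pp⟩
      have hpbZ : (p:ℤ) ∣ b := (Int.natCast_dvd_natCast.mpr hpb).trans (Int.natAbs_dvd.mpr (dvd_refl b))
      have hpq : p ≠ q := by
        rintro rfl
        exact hqb hpbZ
      rcases eq_or_ne p 2 with rfl | hp2
      · -- p = 2 : legendreSym q 2 = χ₈ q = 1
        rw [show ((2:ℕ):ℤ) = (2:ℤ) by norm_num, legendreSym.at_two hq2]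
        have hcast : ((q:ℕ) : ZMod 8) = 1 := by
          rw [← ZMod.natCast_mod q 8, hq81, Nat.cast_one]
        rw [hcast]
        decide
      · -- p odd prime
        have hpodd : ((q:ℤ) : ZMod p) ≠ 0 := by
          rw [Ne, ZMod.intCast_zmod_eq_zero_iff_dvd]
          intro hdvd
          have : p ∣ q := by exact_mod_cast hdvd
          exact hpq ((Nat.prime_dvd_prime_iff_eq pp hq).mp this)
        have hpc : ¬ (p:ℤ) ∣ c := by
          intro hpc
          have hpa : (p:ℤ) ∣ a := by
            have hpZ : Prime (p:ℤ) := Nat.prime_iff_prime_int.mp pp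
            have h1 : (p:ℤ) ∣ a ^ 4 := by
              have : a ^ 4 = (q:ℤ) * c ^ 4 + d * b ^ 2 := by linarith [heqn]
              rw [this]
              exact dvd_add (Dvd.dvd.mul_left (dvd_pow hpc (by norm_num)) _) (Dvd.dvd.mul_left (dvd_pow hpbZ (by norm_num)) _)
            exact hpZ.dvd_of_dvd_pow h1
          exact (Nat.prime_iff_prime_int.mp pp).not_unit (hcopr.isUnit_of_dvd' hpa hpc)
        have hsq : IsSquare ((q:ℤ) : ZMod p) := by
          -- a^4 = q c^4 in ZMod p
          have hcast : ((a:ZMod p)) ^ 4 = ((q:ℤ) : ZMod p) * ((c:ZMod p)) ^ 4 := by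
            have h1 : ((a ^ 4 - (q:ℤ) * c ^ 4 : ℤ) : ZMod p) = ((d * b ^ 2 : ℤ) : ZMod p) := by
              exact_mod_cast congrArg (fun t : ℤ => ((t : ZMod p))) heqn
            have h2 : ((b:ℤ) : ZMod p) = 0 := by
              rw [ZMod.intCast_zmod_eq_zero_iff_dvd]; exact hpbZ
            push_cast at h1 ⊢
            rw [h2] at h1
            linear_combination h1
          have hcne : ((c:ℤ) : ZMod p) ≠ 0 := by
            rw [Ne, ZMod.intCast_zmod_eq_zero_iff_dvd]; exact hpc
          refine ⟨(a:ZMod p) ^ 2 * ((c:ZMod p) ^ 2)⁻¹, ?_⟩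
          have hc2 : ((c:ZMod p)) ^ 2 ≠ 0 := pow_ne_zero 2 hcne
          field_simp
          push_cast at hcast ⊢
          first
          | linear_combination -hcast
          | linear_combination hcast
          | linear_combination ((c:ZMod p))^2 * hcast
        have hqp : legendreSym p (q:ℤ) = 1 := (legendreSym.eq_one_iff p hpodd).mpr hsq
        calc legendreSym q (p:ℤ) = legendreSym p (q:ℤ) :=
              (legendreSym.quadratic_reciprocity_one_mod_four hq41 hp2).symm
          _ = 1 := hqp
    -- hence b is a square mod q
    have hbnat : legendreSym q (b.natAbs : ℤ) = 1 :=
      legendre_prod13 q b.natAbs (Int.natAbs_ne_zero.mpr hb0) hprime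
    have hlegb : legendreSym q b = 1 := by
      have hneg1 : legendreSym q (-1) = 1 := by
        rw [legendreSym.at_neg_one hq2]
        have hc4 : ((q:ℕ) : ZMod 4) = 1 := by
          rw [← ZMod.natCast_mod q 4, hq41, Nat.cast_one]
        rw [hc4]
        decide
      rcases Int.natAbs_eq b with hb' | hb'
      · rw [hb']; exact hbnat
      · rw [hb', show (-(b.natAbs:ℤ)) = -1 * (b.natAbs:ℤ) by ring, legendreSym.mul, hneg1,
          hbnat, mul_one]
    have hbne : ((b:ℤ) : ZMod q) ≠ 0 := by
      rw [Ne, ZMod.intCast_zmod_eq_zero_iff_dvd]; exact hqb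
    have hbsq : IsSquare ((b:ℤ) : ZMod q) := (legendreSym.eq_one_iff q hbne).mp hlegb
    obtain ⟨r, hr⟩ := hbsq
    have hrne : r ≠ 0 := by
      rintro rfl
      rw [mul_zero] at hr
      exact hbne hr
    have hane : ((a:ℤ) : ZMod q) ≠ 0 := by
      rw [Ne, ZMod.intCast_zmod_eq_zero_iff_dvd]; exact hqa
    have hkq : ((a : ZMod q)) ^ 4 = (d : ZMod q) * ((b : ZMod q)) ^ 2 := by
      have h1 := congrArg (fun t : ℤ => (t : ZMod q)) heqn
      push_cast at h1
      rw [ZMod.natCast_self] at h1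
      linear_combination h1
    rw [hr] at hkq
    set M : ZMod q := (a : ZMod q) * r⁻¹ with hM
    have hfield : M ^ 4 = (d : ZMod q) := by
      rw [hM]
      field_simp
      linear_combination hkq
    refine ⟨((M.val : ℕ) : ℤ), ?_⟩
    have hMv : ((M.val : ℕ) : ZMod q) = M := ZMod.natCast_rightInverse M
    rw [← ZMod.intCast_eq_intCast_iff]
    push_cast
    rw [hMv]
    exact hfield
end

section
/- The system U² − 17·W² = 2·Z², U·W = V² has no nontrivial integer solution. -/
lemma natAbs_lt_of_sq_lt {a b : ℤ} (h : a^2 < b^2) : a.natAbs < b.natAbs := by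
  have := Int.natAbs_sq a
  have := Int.natAbs_sq b
  have h2 : a.natAbs^2 < b.natAbs^2 := by
    zify
    simpa [Int.natAbs_pow_two, sq_abs] using h
  exact lt_of_pow_lt_pow_left₀ 2 (Nat.zero_le _) h2

lemma aux_two : ∀ n : ℕ, ∀ u z : ℤ, u.natAbs = n → u ^ 2 = 2 * z ^ 2 → u = 0 := by
  intro n
  induction n using Nat.strong_induction_on with
  | _ n ih =>
    intro u z hn h
    by_contra hu
    have h2 : (2:ℤ) ∣ u := by
      have hd : (2:ℤ) ∣ u^2 := ⟨z^2, h⟩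
      exact (Int.prime_two.dvd_of_dvd_pow hd)
    obtain ⟨u', rfl⟩ := h2
    have hu' : u' ≠ 0 := by rintro rfl; simp at hu
    have hz : z ^ 2 = 2 * u' ^ 2 := by nlinarith [h]
    have hlt : z.natAbs < n := by
      rw [← hn]
      exact natAbs_lt_of_sq_lt (by nlinarith [pow_pos (by positivity : (0:ℤ) < u'^2) 1])
    have := ih z.natAbs hlt z u' rfl hz
    subst this
    simp at hz
    exact hu' (by nlinarith [hz])

lemma natA : ∀ n : ℕ, n ≠ 0 → (∀ p : ℕ, p.Prime → p ∣ n → IsSquare ((p : ZMod 17))) →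
    IsSquare ((n : ZMod 17)) := by
  intro n
  induction n using Nat.strong_induction_on with
  | _ n ih =>
    intro hn hp
    rcases eq_or_ne n 1 with rfl | h1
    · simp
    · have hp' := Nat.minFac_prime h1
      obtain ⟨m, hm⟩ := Nat.minFac_dvd n
      have hm0 : m ≠ 0 := by rintro rfl; simp at hm; exact hn hm
      have h2 : IsSquare ((m:ZMod 17)) :=
        ih m (by rw [hm]; exact lt_mul_of_one_lt_left (Nat.pos_of_ne_zero hm0) hp'.one_lt) hm0
          (fun q hq hqd => hp q hq (hm ▸ hqd.mul_left _))
      have h3 := (hp _ hp' (Dvd.intro m hm.symm)).mul h2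
      rw [hm, Nat.cast_mul]
      exact h3

lemma sqneg1 : IsSquare (-1 : ZMod 17) := by decide

lemma zmod17key : ∀ a z : ZMod 17, z ≠ 0 → IsSquare z → a^4 ≠ 2*z^2 := by decide

lemma quartic (a b z : ℤ) (ha : a ≠ 0) (hb : b ≠ 0) (hab : IsCoprime a b)
    (h : a ^ 4 - 17 * b ^ 4 = 2 * z ^ 2) : False := by
  have hp17 : Prime (17:ℤ) := Int.prime_iff_natAbs_prime.mpr (by norm_num)
  have h17 : ¬ ((17:ℤ) ∣ a ∧ (17:ℤ) ∣ b) := by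
    rintro ⟨h1, h2⟩
    exact hp17.not_unit (hab.isUnit_of_dvd' h1 h2)
  have hz : z ≠ 0 := by
    rintro rfl
    have he : a ^ 4 = 17 * b ^ 4 := by linarith [h]
    have hda : (17:ℤ) ∣ a := hp17.dvd_of_dvd_pow (⟨b^4, he⟩ : (17:ℤ) ∣ a^4)
    obtain ⟨a1, rfl⟩ := hda
    have hdb : (17:ℤ) ∣ b := by
      have : b ^ 4 = 17 * (17 * 17 * a1 ^ 4) := by nlinarith [he]
      exact hp17.dvd_of_dvd_pow ⟨_, this⟩
    exact h17 ⟨⟨a1, rfl⟩, hdb⟩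
  have h17z : ¬ (17:ℤ) ∣ z := by
    intro hdz
    have hda : (17:ℤ) ∣ a := by
      obtain ⟨z1, rfl⟩ := hdz
      exact hp17.dvd_of_dvd_pow (⟨2 * 17 * z1 ^ 2 + b ^ 4, by nlinarith [h]⟩ : (17:ℤ) ∣ a^4)
    have hdb : (17:ℤ) ∣ b := by
      obtain ⟨z1, rfl⟩ := hdz
      obtain ⟨a1, rfl⟩ := hda
      have : b ^ 4 = 17 * (17 * 17 * a1 ^ 4 - 2 * z1 ^ 2) := by nlinarith [h]
      exact hp17.dvd_of_dvd_pow ⟨_, this⟩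
    exact h17 ⟨hda, hdb⟩
  have hkey : ∀ p : ℕ, p.Prime → (p:ℤ) ∣ z → IsSquare ((p : ZMod 17)) := by
    intro p pp hpz
    rcases eq_or_ne p 2 with rfl | hp2
    · decide
    have hp17' : p ≠ 17 := by
      rintro rfl
      exact h17z (by exact_mod_cast hpz)
    haveI : Fact p.Prime := ⟨pp⟩
    have hpp : Prime ((p:ℤ)) := Int.prime_iff_natAbs_prime.mpr (by simpa using pp)
    have hpb : ¬ (p:ℤ) ∣ b := by
      intro hdb
      have hpa : (p:ℤ) ∣ a := by
        obtain ⟨z1, rfl⟩ := hpz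
        obtain ⟨b1, rfl⟩ := hdb
        have : a ^ 4 = (p:ℤ) * (2 * p * z1 ^ 2 + 17 * p ^ 3 * b1 ^ 4) := by nlinarith [h]
        exact hpp.dvd_of_dvd_pow ⟨_, this⟩
      exact hpp.not_unit (hab.isUnit_of_dvd' hpa hdb)
    -- in ZMod p : a^4 = 17 b^4
    have hzz : ((z : ZMod p)) = 0 := by
      rwa [ZMod.intCast_zmod_eq_zero_iff_dvd]
    have hcast : ((a : ZMod p))^4 = 17 * ((b : ZMod p))^4 := by
      have h0 : ((a ^ 4 - 17 * b ^ 4 - 2 * z ^ 2 : ℤ) : ZMod p) = ((0:ℤ) : ZMod p) := by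
        rw [show a ^ 4 - 17 * b ^ 4 - 2 * z ^ 2 = 0 by linarith [h]]
      push_cast at h0
      rw [hzz] at h0
      ring_nf at h0 ⊢
      linear_combination h0
    have hbz : ((b : ZMod p)) ≠ 0 := by
      rw [Ne, ZMod.intCast_zmod_eq_zero_iff_dvd]
      exact hpb
    have hsq17 : IsSquare ((17 : ZMod p)) := by
      refine ⟨(a : ZMod p)^2 / (b : ZMod p)^2, ?_⟩
      have hb2 : ((b : ZMod p))^2 ≠ 0 := pow_ne_zero 2 hbz
      rw [div_mul_div_comm, eq_div_iff (mul_ne_zero hb2 hb2)]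
      linear_combination -hcast
    have pp17 : Nat.Prime 17 := by norm_num
    haveI : Fact (Nat.Prime 17) := ⟨pp17⟩
    exact (ZMod.exists_sq_eq_prime_iff_of_mod_four_eq_one (by norm_num) hp2).mpr hsq17
  -- conclude IsSquare (z : ZMod 17)
  haveI : Fact (Nat.Prime 17) := ⟨by norm_num⟩
  have hnat : IsSquare ((z.natAbs : ZMod 17)) := by
    apply natA
    · simpa using hz
    · intro p pp hpd
      exact hkey p pp (Int.natCast_dvd_natCast.mpr hpd |>.trans (Int.natAbs_dvd.mpr dvd_rfl))
  have hsz : IsSquare ((z : ZMod 17)) := by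
    rcases Int.natAbs_eq z with hz' | hz'
    · rw [hz', Int.cast_natCast]; exact hnat
    · rw [hz', Int.cast_neg, Int.cast_natCast]
      rw [show (-(z.natAbs:ZMod 17) = (-1) * (z.natAbs:ZMod 17)) by ring]
      exact sqneg1.mul hnat
  have hz17 : ((z : ZMod 17)) ≠ 0 := by
    rw [Ne, ZMod.intCast_zmod_eq_zero_iff_dvd]
    exact fun hh => h17z (by exact_mod_cast hh)
  have hc : ((a : ZMod 17))^4 = 2 * ((z : ZMod 17))^2 := by
    have h0 : ((a ^ 4 - 17 * b ^ 4 - 2 * z ^ 2 : ℤ) : ZMod 17) = ((0:ℤ) : ZMod 17) := by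
      rw [show a ^ 4 - 17 * b ^ 4 - 2 * z ^ 2 = 0 by linarith [h]]
    push_cast at h0
    have h17zero : (17 : ZMod 17) = 0 := by rfl
    rw [h17zero] at h0
    ring_nf at h0 ⊢
    linear_combination h0
  exact zmod17key _ _ hz17 hsz hc


lemma descent : ∀ n : ℕ, ∀ u w : ℤ, u.natAbs + w.natAbs = n → ∀ v z : ℤ,
    u ^ 2 - 17 * w ^ 2 = 2 * z ^ 2 → u * w = v ^ 2 → u = 0 ∧ v = 0 ∧ w = 0 ∧ z = 0 := by
  intro n
  induction n using Nat.strong_induction_on with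
  | _ n ih =>
    intro u w hn v z h1 h2
    rcases eq_or_ne u 0 with rfl | hu
    · have hw : w = 0 := by nlinarith [sq_nonneg w, sq_nonneg z]
      subst hw
      have hzz : z = 0 := by nlinarith [sq_nonneg z]
      refine ⟨rfl, ?_, rfl, hzz⟩
      have hv : v ^ 2 = 0 := by linarith [h2]
      exact pow_eq_zero_iff (two_ne_zero) |>.mp hv
    rcases eq_or_ne w 0 with rfl | hw
    · have hu2 : u ^ 2 = 2 * z ^ 2 := by linarith [h1]
      exact absurd (aux_two u.natAbs u z rfl hu2) hu
    exfalso
    rcases eq_or_ne (Int.gcd u w) 1 with hg | hg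
    · -- coprime case
      have hco : IsCoprime u w := Int.isCoprime_iff_gcd_eq_one.mpr hg
      obtain ⟨A, hA⟩ := Int.sq_of_isCoprime hco h2
      obtain ⟨B, hB⟩ := Int.sq_of_isCoprime hco.symm (by rw [mul_comm]; exact h2)
      have hA0 : A ≠ 0 := by rintro rfl; rcases hA with hA | hA <;> simp at hA <;> exact hu hA
      have hB0 : B ≠ 0 := by rintro rfl; rcases hB with hB | hB <;> simp at hB <;> exact hw hB
      have hcoAB : IsCoprime A B := by
        have h4 : IsCoprime (A ^ 2) (B ^ 2) := by
          rcases hA with hA | hA <;> rcases hB with hB | hB <;> rw [hA, hB] at hco <;>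
            [skip; exact (IsCoprime.neg_right_iff _ _).mp hco;
             exact (IsCoprime.neg_left_iff _ _).mp hco;
             exact (IsCoprime.neg_left_iff _ _).mp ((IsCoprime.neg_right_iff _ _).mp hco)]
          exact hco
        exact ((IsCoprime.pow_left_iff two_pos).trans (IsCoprime.pow_right_iff two_pos)).mp h4
      have hu2 : u ^ 2 = A ^ 4 := by rcases hA with hA | hA <;> rw [hA] <;> ring
      have hw2 : w ^ 2 = B ^ 4 := by rcases hB with hB | hB <;> rw [hB] <;> ring
      exact quartic A B z hA0 hB0 hcoAB (by rw [← hu2, ← hw2]; exact h1)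
    · -- descend by a common prime factor
      have hg0 : Int.gcd u w ≠ 0 := by
        simp only [Ne, Int.gcd_eq_zero_iff]
        tauto
      have pp : (Int.gcd u w).minFac.Prime := Nat.minFac_prime hg
      set p := (Int.gcd u w).minFac with hp
      have hppz : Prime ((p : ℤ)) := Int.prime_iff_natAbs_prime.mpr (by simpa using pp)
      have hpu : (p:ℤ) ∣ u :=
        dvd_trans (Int.natCast_dvd_natCast.mpr (Nat.minFac_dvd _)) (Int.gcd_dvd_left _ _)
      have hpw : (p:ℤ) ∣ w :=
        dvd_trans (Int.natCast_dvd_natCast.mpr (Nat.minFac_dvd _)) (Int.gcd_dvd_right _ _)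
      have hpv : (p:ℤ) ∣ v := hppz.dvd_of_dvd_pow (show (p:ℤ) ∣ v ^ 2 from h2 ▸ hpu.mul_right w)
      have hpz : (p:ℤ) ∣ z := by
        obtain ⟨u1, hu1⟩ := hpu
        obtain ⟨w1, hw1⟩ := hpw
        have hsq : 2 * z ^ 2 = (p:ℤ) ^ 2 * (u1 ^ 2 - 17 * w1 ^ 2) := by
          rw [← h1, hu1, hw1]; ring
        rcases eq_or_ne p 2 with hp2 | hp2
        · have hz2 : (2:ℤ) ∣ z ^ 2 := by
            refine ⟨u1 ^ 2 - 17 * w1 ^ 2, ?_⟩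
            rw [hp2] at hsq; push_cast at hsq; linarith
          rw [hp2]
          exact_mod_cast Int.prime_two.dvd_of_dvd_pow hz2
        · apply hppz.dvd_of_dvd_pow (n := 2)
          have hd2 : (p:ℤ) ∣ 2 * z ^ 2 := hsq ▸ (dvd_pow_self _ two_ne_zero).mul_right _
          rcases hppz.dvd_mul.mp hd2 with hc | hc
          · exfalso
            have hpd : p ∣ 2 := by exact_mod_cast hc
            exact hp2 ((Nat.prime_dvd_prime_iff_eq pp Nat.prime_two).mp hpd)
          · exact hc
      obtain ⟨u1, hu1⟩ := hpu
      obtain ⟨w1, hw1⟩ := hpw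
      obtain ⟨v1, hv1⟩ := hpv
      obtain ⟨z1, hz1⟩ := hpz
      have hp0 : ((p:ℤ)) ^ 2 ≠ 0 := pow_ne_zero 2 (by exact_mod_cast pp.ne_zero)
      have key1 : u1 ^ 2 - 17 * w1 ^ 2 = 2 * z1 ^ 2 := by
        apply mul_left_cancel₀ hp0
        rw [show (p:ℤ)^2 * (u1 ^ 2 - 17 * w1 ^ 2) = (↑p * u1) ^ 2 - 17 * (↑p * w1) ^ 2 by ring,
          ← hu1, ← hw1, h1, hz1]
        ring
      have key2 : u1 * w1 = v1 ^ 2 := by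
        apply mul_left_cancel₀ hp0
        rw [show (p:ℤ)^2 * (u1 * w1) = (↑p * u1) * (↑p * w1) by ring, ← hu1, ← hw1, h2, hv1]
        ring
      have hu10 : u1 ≠ 0 := by rintro rfl; simp at hu1; exact hu hu1
      have hw10 : w1 ≠ 0 := by rintro rfl; simp at hw1; exact hw hw1
      have hlt : u1.natAbs + w1.natAbs < n := by
        rw [← hn, hu1, hw1]
        simp only [Int.natAbs_mul, Int.natAbs_natCast]
        have h2p : 2 ≤ p := pp.two_le
        have l1 : 1 ≤ u1.natAbs := Nat.one_le_iff_ne_zero.mpr (by simpa using hu10)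
        have l2 : 1 ≤ w1.natAbs := Nat.one_le_iff_ne_zero.mpr (by simpa using hw10)
        nlinarith
      exact hu10 (ih _ hlt u1 w1 rfl v1 z1 key1 key2).1

theorem stmt14 :
    ¬ ∃ u v w z : ℤ, ¬(u = 0 ∧ v = 0 ∧ w = 0 ∧ z = 0) ∧
      u ^ 2 - 17 * w ^ 2 = 2 * z ^ 2 ∧ u * w = v ^ 2 := by
  rintro ⟨u, v, w, z, hne, h1, h2⟩
  exact hne (descent _ u w rfl v z h1 h2)
end

section
/- For every prime p, the system U² − 17·W² = 2·Z², U·W = V² has a primitive solution modulo p^k for all k ≥ 1. -/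
private lemma exT (p : ℕ) [Fact p.Prime] (d m : ℤ) (hd : ((d : ℤ) : ZMod p) ≠ 0) :
    ∃ t : ℤ, (p : ℤ) ∣ m + d * t := by
  refine ⟨(((-(m : ZMod p)) * ((d : ZMod p))⁻¹).val : ℤ), ?_⟩
  rw [← ZMod.intCast_zmod_eq_zero_iff_dvd]
  push_cast
  rw [ZMod.natCast_val, ZMod.cast_id]
  field_simp
  ring

private lemma henselSq (p : ℕ) [Fact p.Prime] (c a x₀ : ℤ)
    (hder : ((2 * c * x₀ : ℤ) : ZMod p) ≠ 0)
    (h0 : (p : ℤ) ∣ c * x₀ ^ 2 - a) :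
    ∀ k : ℕ, ∃ x : ℤ, ((x : ℤ) : ZMod p) = ((x₀ : ℤ) : ZMod p) ∧
      (p : ℤ) ^ (k + 1) ∣ c * x ^ 2 - a := by
  intro k
  induction k with
  | zero => exact ⟨x₀, rfl, by simpa using h0⟩
  | succ k ih =>
    obtain ⟨x, hx, hdvd⟩ := ih
    obtain ⟨m, hm⟩ := hdvd
    have hdx : ((2 * c * x : ℤ) : ZMod p) ≠ 0 := by
      push_cast at hder ⊢
      rw [hx]; exact fun h => hder h
    obtain ⟨t, ht⟩ := exT p (2 * c * x) m hdx
    obtain ⟨q, hq⟩ := ht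
    refine ⟨x + t * (p : ℤ) ^ (k + 1), ?_, ?_⟩
    · push_cast
      rw [hx, ZMod.natCast_self]
      ring_nf
    · exact ⟨q + c * t ^ 2 * (p : ℤ) ^ k, by linear_combination hm + (p : ℤ) ^ (k + 1) * hq⟩

private lemma henselQt (p : ℕ) [Fact p.Prime] (a x₀ : ℤ)
    (hder : ((4 * x₀ ^ 3 : ℤ) : ZMod p) ≠ 0)
    (h0 : (p : ℤ) ∣ x₀ ^ 4 - a) :
    ∀ k : ℕ, ∃ x : ℤ, ((x : ℤ) : ZMod p) = ((x₀ : ℤ) : ZMod p) ∧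
      (p : ℤ) ^ (k + 1) ∣ x ^ 4 - a := by
  intro k
  induction k with
  | zero => exact ⟨x₀, rfl, by simpa using h0⟩
  | succ k ih =>
    obtain ⟨x, hx, hdvd⟩ := ih
    obtain ⟨m, hm⟩ := hdvd
    have hdx : ((4 * x ^ 3 : ℤ) : ZMod p) ≠ 0 := by
      push_cast at hder ⊢
      rw [hx]; exact fun h => hder h
    obtain ⟨t, ht⟩ := exT p (4 * x ^ 3) m hdx
    obtain ⟨q, hq⟩ := ht
    refine ⟨x + t * (p : ℤ) ^ (k + 1), ?_, ?_⟩
    · push_cast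
      rw [hx, ZMod.natCast_self]
      ring_nf
    · refine ⟨q + (6 * x ^ 2 * t ^ 2 + 4 * x * t ^ 3 * (p : ℤ) ^ (k + 1)
        + t ^ 4 * (p : ℤ) ^ (2 * (k + 1))) * (p : ℤ) ^ k, ?_⟩
      linear_combination hm + (p : ℤ) ^ (k + 1) * hq

private lemma twoSq (a : ℤ) (ha : (8 : ℤ) ∣ a - 1) :
    ∀ k : ℕ, ∃ x : ℤ, x % 2 = 1 ∧ (2 : ℤ) ^ k ∣ x ^ 2 - a := by
  have H : ∀ k : ℕ, ∃ x : ℤ, x % 2 = 1 ∧ (2 : ℤ) ^ (k + 3) ∣ x ^ 2 - a := by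
    intro k
    induction k with
    | zero =>
      refine ⟨1, rfl, ?_⟩
      have : (1 : ℤ) ^ 2 - a = (-1) * (a - 1) := by ring
      rw [this]
      exact dvd_mul_of_dvd_right (by norm_num at ha ⊢; exact_mod_cast ha) _
    | succ k ih =>
      obtain ⟨x, hx, hdvd⟩ := ih
      obtain ⟨m, hm⟩ := hdvd
      have hev : (2 : ℤ) ∣ x + 1 := by omega
      obtain ⟨n, hn⟩ := hev
      refine ⟨x + m * (2 : ℤ) ^ (k + 2), ?_, ?_⟩
      · have h2 : (2:ℤ) ∣ m * (2:ℤ)^(k+2) := ⟨m * 2^(k+1), by ring⟩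
        omega
      · refine ⟨m * n + m ^ 2 * 2 ^ k, ?_⟩
        linear_combination hm + 2 ^ (k + 3) * m * hn
  intro k
  obtain ⟨x, h1, h2⟩ := H k
  exact ⟨x, h1, dvd_trans (pow_dvd_pow 2 (by omega)) h2⟩
private lemma modeqOf {n a b : ℤ} (h : n ∣ a - b) : a ≡ b [ZMOD n] :=
  (Int.modEq_iff_dvd.mpr h).symm

private lemma nsqMul {p : ℕ} [Fact p.Prime] {a b : ZMod p}
    (ha : ¬IsSquare a) (hb : ¬IsSquare b) : IsSquare (a * b) := by
  have h1 := (quadraticChar_neg_one_iff_not_isSquare (F := ZMod p)).2 ha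
  have h2 := (quadraticChar_neg_one_iff_not_isSquare (F := ZMod p)).2 hb
  have hab : a * b ≠ 0 := by
    rintro h
    rcases mul_eq_zero.1 h with h | h
    · exact ha (h ▸ (IsSquare.zero : IsSquare (0 : ZMod p)))
    · exact hb (h ▸ (IsSquare.zero : IsSquare (0 : ZMod p)))
  exact (quadraticChar_one_iff_isSquare hab).1 (by rw [map_mul, h1, h2]; ring)

theorem stmt16 (p : ℕ) (hp : p.Prime) :
    ∀ k : ℕ, 1 ≤ k → ∃ u v w z : ℤ,
      Int.gcd u (Int.gcd v (Int.gcd w z)) = 1 ∧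
      u ^ 2 - 17 * w ^ 2 ≡ 2 * z ^ 2 [ZMOD ((p : ℤ) ^ k)] ∧
      u * w ≡ v ^ 2 [ZMOD ((p : ℤ) ^ k)] := by
  intro k hk
  haveI : Fact p.Prime := ⟨hp⟩
  by_cases hp2 : p = 2
  · -- p = 2
    subst hp2
    obtain ⟨x, hodd, hx⟩ := twoSq 17 (by norm_num) (k + 4)
    have h16 : (16 : ℤ) ∣ x ^ 2 - 17 := by
      refine dvd_trans ?_ hx
      have : (16 : ℤ) = 2 ^ 4 := by norm_num
      rw [this]
      exact pow_dvd_pow 2 (by omega)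
    have hpm : (8 : ℤ) ∣ x - 1 ∨ (8 : ℤ) ∣ x + 1 := by
      set r := x % 8 with hr
      have hr0 : 0 ≤ r := Int.emod_nonneg x (by norm_num)
      have hr8 : r < 8 := Int.emod_lt_of_pos x (by norm_num)
      have hxr : x = 8 * (x / 8) + r := by rw [hr]; omega
      have h16r : (16 : ℤ) ∣ r ^ 2 - 17 := by
        obtain ⟨m, hm⟩ := h16
        refine ⟨m - (4 * (x / 8) ^ 2 + (x / 8) * r), ?_⟩
        have hx2 : x ^ 2 = (8 * (x / 8) + r) ^ 2 := by rw [← hxr]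
        linear_combination hm - hx2
      have hrodd : r % 2 = 1 := by omega
      interval_cases r <;> revert h16r hrodd <;> norm_num <;> omega
    obtain ⟨y, hy8, hysq⟩ : ∃ y : ℤ, (8 : ℤ) ∣ y - 1 ∧ y ^ 2 = x ^ 2 := by
      rcases hpm with h | h
      · exact ⟨x, h, rfl⟩
      · exact ⟨-x, by omega, by ring⟩
    obtain ⟨v, hvodd, hv⟩ := twoSq y hy8 k
    refine ⟨y, v, 1, 0, by simp, ?_, ?_⟩
    · apply modeqOf
      refine dvd_trans (pow_dvd_pow _ (show k ≤ k + 4 by omega)) ?_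
      have he : y ^ 2 - 17 * 1 ^ 2 - 2 * 0 ^ 2 = x ^ 2 - 17 := by rw [← hysq]; ring
      rw [show ((2 : ℕ) : ℤ) = (2 : ℤ) by norm_num, he]
      exact hx
    · apply modeqOf
      obtain ⟨m, hm⟩ := hv
      exact ⟨-m, by push_cast; linear_combination -hm⟩
  · -- p odd
    have h2ne : (2 : ZMod p) ≠ 0 := by
      intro h
      have hd : (p : ℕ) ∣ 2 := by
        rw [← ZMod.natCast_eq_zero_iff]; exact_mod_cast h
      exact hp2 ((Nat.prime_dvd_prime_iff_eq hp Nat.prime_two).1 hd)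
    have h4ne : (4 : ZMod p) ≠ 0 := by
      intro h
      have h22 : (2 : ZMod p) * 2 = 0 := by linear_combination h
      rcases mul_eq_zero.1 h22 with h' | h' <;> exact h2ne h'
    have lift : ∀ s : ZMod p, ∃ x₀ : ℤ, ((x₀ : ℤ) : ZMod p) = s := fun s =>
      ⟨(s.val : ℤ), by push_cast; rw [ZMod.natCast_val, ZMod.cast_id]⟩
    by_cases hs2 : IsSquare (2 : ZMod p)
    · -- case 1 : (√2, 0, 0, 1)
      obtain ⟨s, hs⟩ := hs2
      obtain ⟨x₀, hx₀⟩ := lift s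
      have hsne : s ≠ 0 := by rintro rfl; exact h2ne (by rw [hs]; ring)
      have hder : ((2 * 1 * x₀ : ℤ) : ZMod p) ≠ 0 := by
        push_cast
        rw [hx₀]
        simpa using mul_ne_zero h2ne hsne
      have h0 : (p : ℤ) ∣ 1 * x₀ ^ 2 - 2 := by
        rw [← ZMod.intCast_zmod_eq_zero_iff_dvd]
        push_cast
        rw [hx₀]
        linear_combination -hs
      obtain ⟨x, -, hdvd⟩ := henselSq p 1 2 x₀ hder h0 (k - 1)
      rw [show k - 1 + 1 = k by omega] at hdvd
      obtain ⟨m, hm⟩ := hdvd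
      exact ⟨x, 0, 0, 1, by simp, modeqOf ⟨m, by linear_combination hm⟩,
        modeqOf (by simp)⟩
    · by_cases hsm2 : IsSquare (-2 : ZMod p)
      · -- case 2 : (1, 1, 1, √-8)
        obtain ⟨s, hs⟩ := hsm2
        obtain ⟨x₀, hx₀⟩ := lift (2 * s)
        have hsne : s ≠ 0 := by
          rintro rfl
          apply h2ne
          have h' : (-2 : ZMod p) = 0 := by rw [hs]; ring
          linear_combination -h'
        have hder : ((2 * 1 * x₀ : ℤ) : ZMod p) ≠ 0 := by
          push_cast
          rw [hx₀]
          simpa using mul_ne_zero h2ne (mul_ne_zero h2ne hsne)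
        have h0 : (p : ℤ) ∣ 1 * x₀ ^ 2 - (-8) := by
          rw [← ZMod.intCast_zmod_eq_zero_iff_dvd]
          push_cast
          rw [hx₀]
          linear_combination -4 * hs
        obtain ⟨x, -, hdvd⟩ := henselSq p 1 (-8) x₀ hder h0 (k - 1)
        rw [show k - 1 + 1 = k by omega] at hdvd
        obtain ⟨m, hm⟩ := hdvd
        exact ⟨1, 1, 1, x, by simp, modeqOf ⟨-2 * m, by linear_combination -2 * hm⟩,
          modeqOf (by simp)⟩
      · by_cases hs17 : IsSquare (17 : ZMod p)
        · -- case 4 : 17 = t²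
          obtain ⟨t, ht⟩ := hs17
          have h17ne : (17 : ZMod p) ≠ 0 := by
            intro h
            exact hs2 ⟨6, by linear_combination (-2 : ZMod p) * h⟩
          have htne : t ≠ 0 := by rintro rfl; exact h17ne (by rw [ht]; ring)
          by_cases hst : IsSquare t
          · -- 17 is a fourth power : (x², x, 1, 0)
            obtain ⟨s, hss⟩ := hst
            have hsne : s ≠ 0 := by rintro rfl; exact htne (by rw [hss]; ring)
            obtain ⟨x₀, hx₀⟩ := lift s
            have hs4 : s ^ 4 = (17 : ZMod p) := by
              rw [ht, hss]; ring
            have hder : ((4 * x₀ ^ 3 : ℤ) : ZMod p) ≠ 0 := by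
              push_cast
              rw [hx₀]
              exact mul_ne_zero h4ne (pow_ne_zero _ hsne)
            have h0 : (p : ℤ) ∣ x₀ ^ 4 - 17 := by
              rw [← ZMod.intCast_zmod_eq_zero_iff_dvd]
              push_cast
              rw [hx₀]
              linear_combination hs4
            obtain ⟨x, -, hdvd⟩ := henselQt p 17 x₀ hder h0 (k - 1)
            rw [show k - 1 + 1 = k by omega] at hdvd
            obtain ⟨m, hm⟩ := hdvd
            exact ⟨x ^ 2, x, 1, 0, by simp, modeqOf ⟨m, by linear_combination hm⟩,
              modeqOf ⟨0, by ring⟩⟩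
          · -- -17 is a fourth power : (x², x, 1, x²)
            have hm1 : IsSquare (-1 : ZMod p) := by
              by_contra h
              have := nsqMul h hs2
              rw [show (-1 : ZMod p) * 2 = -2 by ring] at this
              exact hsm2 this
            obtain ⟨i, hi⟩ := hm1
            have hm1ne1 : (-1 : ZMod p) ≠ 1 := by
              intro h; apply h2ne; linear_combination -h
            have hip : ¬IsSquare i := by
              rintro ⟨c, hc⟩
              have hc4 : c ^ 4 = (-1 : ZMod p) := by rw [hi, hc]; ring
              have hcne : c ≠ 0 := by
                rintro rfl
                apply hm1ne1
                have h0' : (0 : ZMod p) = -1 := by rw [← hc4]; ring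
                linear_combination (-2 : ZMod p) * h0'
              have hd8 : orderOf c ∣ 8 := by
                apply orderOf_dvd_of_pow_eq_one
                rw [show (8 : ℕ) = 4 * 2 by norm_num, pow_mul, hc4]
                ring
              have hnd4 : ¬orderOf c ∣ 4 := by
                intro h
                have h1 := orderOf_dvd_iff_pow_eq_one.1 h
                rw [hc4] at h1
                exact hm1ne1 h1
              have h8 : orderOf c = 8 := by
                obtain ⟨j, hj3, hde⟩ := (Nat.dvd_prime_pow Nat.prime_two).1
                  (by simpa using hd8 : orderOf c ∣ 2 ^ 3)
                rcases Nat.lt_or_ge j 3 with hj | hj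
                · exfalso
                  apply hnd4
                  rw [hde, show (4 : ℕ) = 2 ^ 2 by norm_num]
                  exact pow_dvd_pow 2 (by omega)
                · rw [hde, show j = 3 by omega]; norm_num
              have hcp : c ^ (p - 1) = 1 := ZMod.pow_card_sub_one_eq_one hcne
              have h8d : (8 : ℕ) ∣ p - 1 := h8 ▸ orderOf_dvd_of_pow_eq_one hcp
              have hp8 : ¬(p % 8 = 1 ∨ p % 8 = 7) := fun h =>
                hs2 ((ZMod.exists_sq_eq_two_iff hp2).2 h)
              have hpge : 2 ≤ p := hp.two_le
              omega
            obtain ⟨s, hss⟩ := nsqMul hip hst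
            have hs4 : s ^ 4 = (-17 : ZMod p) := by
              have h1 : s ^ 4 = (i * t) * (i * t) := by
                rw [show s ^ 4 = (s * s) * (s * s) by ring, ← hss]
              rw [h1, show (i * t) * (i * t) = (i * i) * (t * t) by ring, ← hi, ← ht]
              ring
            have hsne : s ≠ 0 := by
              rintro rfl
              apply h17ne
              linear_combination hs4
            obtain ⟨x₀, hx₀⟩ := lift s
            have hder : ((4 * x₀ ^ 3 : ℤ) : ZMod p) ≠ 0 := by
              push_cast
              rw [hx₀]
              exact mul_ne_zero h4ne (pow_ne_zero _ hsne)
            have h0 : (p : ℤ) ∣ x₀ ^ 4 - (-17) := by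
              rw [← ZMod.intCast_zmod_eq_zero_iff_dvd]
              push_cast
              rw [hx₀]
              linear_combination hs4
            obtain ⟨x, -, hdvd⟩ := henselQt p (-17) x₀ hder h0 (k - 1)
            rw [show k - 1 + 1 = k by omega] at hdvd
            obtain ⟨m, hm⟩ := hdvd
            exact ⟨x ^ 2, x, 1, x ^ 2, by simp,
              modeqOf ⟨-m, by linear_combination -hm⟩,
              modeqOf ⟨0, by ring⟩⟩
        · -- case 3 : (0, 0, w, 1) with 17 w² = -2
          have h17ne : (17 : ZMod p) ≠ 0 := fun h =>
            hs17 (h ▸ (IsSquare.zero : IsSquare (0 : ZMod p)))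
          obtain ⟨s, hs⟩ := nsqMul hsm2 hs17
          have hsne : s ≠ 0 := by
            rintro rfl
            have h34 : (2 : ZMod p) * 17 = 0 := by linear_combination -hs
            rcases mul_eq_zero.1 h34 with h | h
            · exact h2ne h
            · exact h17ne h
          set w₁ : ZMod p := s * (17 : ZMod p)⁻¹ with hw₁
          have hw17 : (17 : ZMod p) * w₁ ^ 2 = -2 := by
            rw [hw₁]
            field_simp
            linear_combination -hs
          obtain ⟨x₀, hx₀⟩ := lift w₁
          have hwne : w₁ ≠ 0 := by
            intro h
            rw [h] at hw17
            apply h2ne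
            linear_combination hw17
          have hder : ((2 * 17 * x₀ : ℤ) : ZMod p) ≠ 0 := by
            push_cast
            rw [hx₀]
            intro h
            have h' : ((2 : ZMod p) * 17) * w₁ = 0 := by linear_combination h
            rcases mul_eq_zero.1 h' with h'' | h''
            · rcases mul_eq_zero.1 h'' with h3 | h3
              · exact h2ne h3
              · exact h17ne h3
            · exact hwne h''
          have h0 : (p : ℤ) ∣ 17 * x₀ ^ 2 - (-2) := by
            rw [← ZMod.intCast_zmod_eq_zero_iff_dvd]
            push_cast
            rw [hx₀]
            linear_combination hw17
          obtain ⟨x, -, hdvd⟩ := henselSq p 17 (-2) x₀ hder h0 (k - 1)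
          rw [show k - 1 + 1 = k by omega] at hdvd
          obtain ⟨m, hm⟩ := hdvd
          exact ⟨0, 0, x, 1, by simp, modeqOf ⟨-m, by linear_combination -hm⟩,
            modeqOf (by simp)⟩
end

section
/- Let R be an integral domain and a, b, c, d ∈ R. The system a·U² + b·V² + c·W² = d·Z², U·W = V² has a nontrivial R-solution if and only if the equation a·X⁴ + b·X²·Y² + c·Y⁴ = d·Z² has a nontrivial R-solution. -/
theorem stmt17 (R : Type*) [CommRing R] [IsDomain R] (a b c d : R) :
    (∃ u v w z : R, ¬(u = 0 ∧ v = 0 ∧ w = 0 ∧ z = 0) ∧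
      a * u ^ 2 + b * v ^ 2 + c * w ^ 2 = d * z ^ 2 ∧ u * w = v ^ 2) ↔
    (∃ x y z : R, ¬(x = 0 ∧ y = 0 ∧ z = 0) ∧
      a * x ^ 4 + b * x ^ 2 * y ^ 2 + c * y ^ 4 = d * z ^ 2) := by
  constructor
  · rintro ⟨u, v, w, z, hnt, heq, hv⟩
    by_cases hu : u = 0
    · by_cases hw : w = 0
      · have hv0 : v = 0 := by
          have : v ^ 2 = 0 := by rw [← hv, hu]; ring
          exact pow_eq_zero_iff (by norm_num) |>.mp this
        have hz : z ≠ 0 := fun hz => hnt ⟨hu, hv0, hw, hz⟩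
        refine ⟨0, 0, z, fun h => hz h.2.2, ?_⟩
        rw [hu, hv0, hw] at heq
        linear_combination heq
      · refine ⟨v, w, w * z, fun h => hw h.2.1, ?_⟩
        linear_combination w ^ 2 * heq - a * (u * w + v ^ 2) * hv
    · refine ⟨u, v, u * z, fun h => hu h.1, ?_⟩
      linear_combination u ^ 2 * heq - c * (u * w + v ^ 2) * hv
  · rintro ⟨x, y, z, hnt, heq⟩
    refine ⟨x ^ 2, x * y, y ^ 2, z, ?_, by linear_combination heq, by ring⟩
    rintro ⟨hx, -, hy, hz⟩
    exact hnt ⟨pow_eq_zero_iff (by norm_num) |>.mp hx, pow_eq_zero_iff (by norm_num) |>.mp hy, hz⟩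
end

section
/- Let p be a prime not dividing 2·a·c·(b² − 4·a·c), where a, b, c are integers. If f(T) = a·T⁴ + b·T² + c has a root modulo p, then f has a root in the p-adic integers ℤ_p. -/
open Polynomial

theorem stmt18 (p : ℕ) [Fact p.Prime] (a b c : ℤ)
    (hp : ¬ (p : ℤ) ∣ 2 * a * c * (b ^ 2 - 4 * a * c))
    (h : ∃ t : ℤ, a * t ^ 4 + b * t ^ 2 + c ≡ 0 [ZMOD (p : ℤ)]) :
    ∃ x : ℤ_[p], (a : ℤ_[p]) * x ^ 4 + (b : ℤ_[p]) * x ^ 2 + (c : ℤ_[p]) = 0 := by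
  obtain ⟨t, ht⟩ := h
  have hroot : (p : ℤ) ∣ a * t ^ 4 + b * t ^ 2 + c := by
    simpa using (Int.ModEq.dvd ht.symm)
  -- p doesn't divide the derivative 4a t³ + 2b t
  have hd : ¬ (p : ℤ) ∣ 4 * a * t ^ 3 + 2 * b * t := by
    intro hdvd
    have hpp : Prime (p : ℤ) := Nat.prime_iff_prime_int.mp Fact.out
    have h2 : ¬ (p:ℤ) ∣ 2 := fun h2 => hp (h2.mul_right _ |>.mul_right _ |>.mul_right _)
    have hc : ¬ (p:ℤ) ∣ c := fun hc => hp ((hc.mul_left (2 * a)).mul_right _)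
    have hdisc : ¬ (p:ℤ) ∣ b ^ 2 - 4 * a * c := fun hd => hp (hd.mul_left _)
    -- 4a t³ + 2b t = 2t(2a t² + b)
    have heq : 4 * a * t ^ 3 + 2 * b * t = 2 * t * (2 * a * t ^ 2 + b) := by ring
    rw [heq] at hdvd
    rcases hpp.dvd_mul.mp hdvd with h1 | h1
    · rcases hpp.dvd_mul.mp h1 with h1 | h1
      · exact h2 h1
      · -- p ∣ t ⇒ p ∣ c
        have h4 : (p:ℤ) ∣ a * t ^ 4 + b * t ^ 2 :=
          dvd_add ((h1.pow four_ne_zero).mul_left a) ((h1.pow two_ne_zero).mul_left b)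
        exact hc ((dvd_add_right h4).mp hroot)
    · -- p ∣ 2a t² + b ⇒ p ∣ (2a t² + b)² = 4a(at⁴+bt²) + b², and p ∣ at⁴+bt²+c ⇒ p ∣ b²-4ac
      apply hdisc
      have hsq : (p:ℤ) ∣ (2 * a * t ^ 2 + b) ^ 2 := h1.pow (by norm_num)
      have key : (2 * a * t ^ 2 + b) ^ 2 = 4 * a * (a * t ^ 4 + b * t ^ 2 + c) + (b ^ 2 - 4 * a * c) := by
        ring
      have h6 : (p:ℤ) ∣ 4 * a * (a * t ^ 4 + b * t ^ 2 + c) := hroot.mul_left _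
      rw [key] at hsq
      exact (dvd_add_right h6).mp hsq
  -- Set up Hensel
  set F : Polynomial ℤ_[p] := C (a : ℤ_[p]) * X ^ 4 + C (b : ℤ_[p]) * X ^ 2 + C (c : ℤ_[p]) with hF
  have hevalF : ∀ x : ℤ_[p], F.eval x = (a : ℤ_[p]) * x ^ 4 + (b : ℤ_[p]) * x ^ 2 + (c : ℤ_[p]) := by
    intro x
    simp only [hF, eval_add, eval_mul, eval_pow, eval_C, eval_X]
  have hderiv : F.derivative = C ((4 * a : ℤ) : ℤ_[p]) * X ^ 3 + C ((2 * b : ℤ) : ℤ_[p]) * X := by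
    simp only [hF, derivative_add, derivative_mul, derivative_C, derivative_X_pow, derivative_X]
    push_cast
    simp only [C_mul]
    ring
  have hFt : F.eval (t : ℤ_[p]) = ((a * t ^ 4 + b * t ^ 2 + c : ℤ) : ℤ_[p]) := by
    rw [hevalF]; push_cast; ring
  have hFt' : F.derivative.eval (t : ℤ_[p]) = ((4 * a * t ^ 3 + 2 * b * t : ℤ) : ℤ_[p]) := by
    rw [hderiv]
    simp only [eval_add, eval_mul, eval_pow, eval_C, eval_X]
    push_cast; ring
  have hnorm1 : ‖F.eval (t : ℤ_[p])‖ < 1 := by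
    rw [hFt]; exact (PadicInt.norm_int_lt_one_iff_dvd _).mpr hroot
  have hnorm2 : ‖F.derivative.eval (t : ℤ_[p])‖ = 1 := by
    rw [hFt']
    have h1 : ¬ ‖((4 * a * t ^ 3 + 2 * b * t : ℤ) : ℤ_[p])‖ < 1 := by
      rw [PadicInt.norm_int_lt_one_iff_dvd]; exact hd
    exact le_antisymm (PadicInt.norm_le_one _) (not_lt.mp h1)
  obtain ⟨z, hz, -⟩ := hensels_lemma (F := F) (a := (t : ℤ_[p]))
    (by simp only [coe_aeval_eq_eval]; rw [hnorm2]; simpa using hnorm1)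
  exact ⟨z, by rw [← hevalF]; exact hz⟩
end

section
/- Let p be an odd prime and a, b, c, d ∈ F_p with a·c·d·(b² − 4·a·c) ≠ 0. Then the system a·U² + b·V² + c·W² = d·Z², U·W = V² has a nontrivial solution in F_p⁴. -/
open Finset

-- The hyperbola t^2 - u^2 = e (e ≠ 0) is in bijection with nonzero v
lemma sum_quadChar_sq_sub {p : ℕ} [Fact p.Prime] (hp2 : ringChar (ZMod p) ≠ 2)
    {e : ZMod p} (he : e ≠ 0) :
    ∑ t : ZMod p, quadraticChar (ZMod p) (t ^ 2 - e) = -1 := by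
  have h2 : (2 : ZMod p) ≠ 0 := Ring.two_ne_zero hp2
  have key : ∑ t : ZMod p, ((quadraticChar (ZMod p) (t ^ 2 - e)) + 1)
      = ((p : ℤ) - 1) := by
    have step1 : ∀ t : ZMod p, (quadraticChar (ZMod p) (t ^ 2 - e)) + 1
        = (Fintype.card {u : ZMod p // u ^ 2 = t ^ 2 - e} : ℤ) := by
      intro t
      rw [← quadraticChar_card_sqrts hp2 (t ^ 2 - e), Set.toFinset_card]
      rfl
    simp_rw [step1]
    rw [← Nat.cast_sum]
    rw [← Fintype.card_sigma]
    have E1 : (Σ t : ZMod p, {u : ZMod p // u ^ 2 = t ^ 2 - e})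
        ≃ {tu : ZMod p × ZMod p // tu.1 ^ 2 - tu.2 ^ 2 = e} :=
      { toFun := fun x => ⟨(x.1, x.2.1), by linear_combination -x.2.2⟩
        invFun := fun x => ⟨x.1.1, x.1.2, by linear_combination -x.2⟩
        left_inv := fun x => rfl
        right_inv := fun x => rfl }
    have E2 : {tu : ZMod p × ZMod p // tu.1 ^ 2 - tu.2 ^ 2 = e}
        ≃ {v : ZMod p // v ≠ 0} :=
      { toFun := fun x => ⟨x.1.1 + x.1.2, by
          intro h0
          apply he
          rw [← x.2]
          have : x.1.1 = -x.1.2 := by linear_combination h0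
          rw [this]; ring⟩
        invFun := fun v => ⟨((v.1 + e * v.1⁻¹) / 2, (v.1 - e * v.1⁻¹) / 2), by
          have hv := v.2
          field_simp
          ring⟩
        left_inv := fun x => by
          obtain ⟨⟨t, u⟩, hx⟩ := x
          have htu : t + u ≠ 0 := by
            intro h0
            apply he; rw [← hx]
            have : t = -u := by linear_combination h0
            rw [this]; ring
          have he2 : e = (t + u) * (t - u) := by linear_combination -hx
          ext <;> simp only <;> rw [he2] <;> field_simp <;> ring
        right_inv := fun v => by
          obtain ⟨v, hv⟩ := v
          ext
          simp only
          field_simp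
          ring }
    rw [Fintype.card_congr (E1.trans E2)]
    have : Fintype.card {v : ZMod p // v ≠ 0} = p - 1 := by
      simp [Fintype.card_subtype_compl, ZMod.card]
    rw [this]
    have hp1 : 1 ≤ p := (Fact.out : p.Prime).one_lt.le
    push_cast [Nat.cast_sub hp1]
    ring
  have := key
  rw [Finset.sum_add_distrib, Finset.sum_const, Finset.card_univ, ZMod.card,
    nsmul_eq_mul, mul_one] at this
  linarith

lemma sum_quadChar_quadratic {p : ℕ} [Fact p.Prime] (hp2 : ringChar (ZMod p) ≠ 2)
    {a b c : ZMod p} (hc : c ≠ 0) (hD : b ^ 2 - 4 * a * c ≠ 0) :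
    ∑ s : ZMod p, quadraticChar (ZMod p) (c * s ^ 2 + b * s + a)
      = - quadraticChar (ZMod p) c := by
  have h2 : (2 : ZMod p) ≠ 0 := Ring.two_ne_zero hp2
  have h4 : (4 : ZMod p) ≠ 0 := by
    have := mul_ne_zero h2 h2
    rwa [show (2 : ZMod p) * 2 = 4 by norm_num] at this
  set e : ZMod p := (b ^ 2 - 4 * a * c) / (4 * c ^ 2) with he_def
  have he : e ≠ 0 := div_ne_zero hD (mul_ne_zero h4 (pow_ne_zero _ hc))
  have hid : ∀ s : ZMod p, c * s ^ 2 + b * s + a = c * ((s + b / (2 * c)) ^ 2 - e) := by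
    intro s
    rw [he_def]
    field_simp
    ring
  simp_rw [hid, map_mul, ← Finset.mul_sum]
  have := Equiv.sum_comp (Equiv.addRight (b / (2 * c)))
    (fun t => quadraticChar (ZMod p) (t ^ 2 - e))
  simp only [Equiv.coe_addRight] at this
  rw [this, sum_quadChar_sq_sub hp2 he, mul_neg_one]

theorem stmt19 (p : ℕ) [Fact p.Prime] (hp : Odd p) (a b c d : ZMod p)
    (h : a * c * d * (b ^ 2 - 4 * a * c) ≠ 0) :
    ∃ u v w z : ZMod p,
      a * u ^ 2 + b * v ^ 2 + c * w ^ 2 = d * z ^ 2 ∧ u * w = v ^ 2 ∧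
      ¬(u = 0 ∧ v = 0 ∧ w = 0 ∧ z = 0) := by
  have hp2 : ringChar (ZMod p) ≠ 2 := by
    rw [ZMod.ringChar_zmod_n]
    rintro rfl
    exact (Nat.not_odd_iff_even.mpr (by norm_num)) hp
  have ha : a ≠ 0 := fun h0 => h (by rw [h0]; ring)
  have hc : c ≠ 0 := fun h0 => h (by rw [h0]; ring)
  have hd : d ≠ 0 := fun h0 => h (by rw [h0]; ring)
  have hD : b ^ 2 - 4 * a * c ≠ 0 := fun h0 => h (by rw [h0]; ring)
  by_cases hcd : ∃ z : ZMod p, d * z ^ 2 = c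
  · obtain ⟨z, hz⟩ := hcd
    exact ⟨0, 0, 1, z, by rw [← hz]; ring, by ring, fun hh => one_ne_zero hh.2.2.1⟩
  -- main case: find t, x with a + b t² + c t⁴ = d x²
  suffices hmain : ∃ t x : ZMod p, a + b * t ^ 2 + c * t ^ 4 = d * x ^ 2 by
    obtain ⟨t, x, htx⟩ := hmain
    exact ⟨1, t, t ^ 2, x, by rw [← htx]; ring, by ring, fun hh => one_ne_zero hh.1⟩
  by_contra hno
  push_neg at hno
  set χ := quadraticChar (ZMod p) with hχ
  set f : ZMod p → ZMod p := fun s => c * s ^ 2 + b * s + a with hf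
  -- every value on a square s = t² gives χ (d⁻¹ * f s) = -1
  set Q : Finset (ZMod p) := Finset.image (fun x : ZMod p => x ^ 2) Finset.univ with hQ
  have hQall : ∀ s ∈ Q, χ (d⁻¹ * f s) = -1 := by
    intro s hs
    obtain ⟨t, -, rfl⟩ := Finset.mem_image.mp hs
    have hne : d⁻¹ * f (t ^ 2) ≠ 0 := by
      intro h0
      apply hno t 0
      have : f (t ^ 2) = 0 := by
        have := mul_eq_zero.mp h0
        rcases this with h1 | h1
        · exact absurd h1 (inv_ne_zero hd)
        · exact h1
      rw [hf] at this
      simp only at this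
      linear_combination this
    rw [quadraticChar_neg_one_iff_not_isSquare]
    rintro ⟨r, hr⟩
    apply hno t r
    have : d * (d⁻¹ * f (t ^ 2)) = d * (r * r) := by rw [hr]
    rw [← mul_assoc, mul_inv_cancel₀ hd, one_mul, hf] at this
    simp only at this
    linear_combination this
  -- the character sum equals 1
  have hS : ∑ s : ZMod p, χ (d⁻¹ * f s) = 1 := by
    have hsum : ∑ s : ZMod p, χ (f s) = -χ c := sum_quadChar_quadratic hp2 hc hD
    simp_rw [map_mul]
    rw [← Finset.mul_sum, hsum]
    have hdc : χ (d⁻¹ * c) = -1 := by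
      rw [quadraticChar_neg_one_iff_not_isSquare]
      rintro ⟨r, hr⟩
      apply hcd
      refine ⟨r, ?_⟩
      have : d * (d⁻¹ * c) = d * (r * r) := by rw [hr]
      rw [← mul_assoc, mul_inv_cancel₀ hd, one_mul] at this
      rw [this]; ring
    rw [map_mul] at hdc
    linear_combination -hdc
  -- split the sum over Q and its complement
  have hsplit : ∑ s ∈ Finset.univ \ Q, χ (d⁻¹ * f s) = 1 + (Q.card : ℤ) := by
    have := Finset.sum_sdiff (Finset.subset_univ Q)
      (f := fun s => χ (d⁻¹ * f s))
    rw [hS] at this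
    have hQsum : ∑ s ∈ Q, χ (d⁻¹ * f s) = -(Q.card : ℤ) := by
      rw [Finset.sum_congr rfl hQall, Finset.sum_const, nsmul_eq_mul]
      ring
    linarith [this, hQsum]
  have hbound : ∑ s ∈ Finset.univ \ Q, χ (d⁻¹ * f s) ≤ ((Finset.univ \ Q).card : ℤ) := by
    calc ∑ s ∈ Finset.univ \ Q, χ (d⁻¹ * f s)
        ≤ ∑ _s ∈ Finset.univ \ Q, (1 : ℤ) := by
          apply Finset.sum_le_sum
          intro i _
          rcases (quadraticChar_isQuadratic (ZMod p)) (d⁻¹ * f i) with h1 | h1 | h1 <;>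
            rw [hχ, h1] <;> norm_num
      _ = ((Finset.univ \ Q).card : ℤ) := by simp
  have hcardQle : Q.card ≤ p := by
    have := Finset.card_le_card (Finset.subset_univ Q)
    rwa [Finset.card_univ, ZMod.card] at this
  have hsdcard : ((Finset.univ \ Q).card : ℤ) = (p : ℤ) - Q.card := by
    rw [Finset.card_sdiff_of_subset (Finset.subset_univ Q), Finset.card_univ, ZMod.card]
    push_cast [Nat.cast_sub hcardQle]
    ring
  -- so 2 * Q.card ≤ p - 1
  have hup : 2 * (Q.card : ℤ) + 1 ≤ (p : ℤ) := by
    rw [hsplit] at hbound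
    rw [hsdcard] at hbound
    linarith
  -- lower bound on Q.card: squaring is ≤ 2-to-1 and exactly 1-to-1 at 0
  have h0mem : (0 : ZMod p) ∈ Q := Finset.mem_image.mpr ⟨0, Finset.mem_univ _, by ring⟩
  have hfib0 : (Finset.univ.filter fun x : ZMod p => x ^ 2 = 0).card = 1 := by
    have : (Finset.univ.filter fun x : ZMod p => x ^ 2 = 0) = {0} := by
      ext x
      simp [pow_eq_zero_iff]
    rw [this, Finset.card_singleton]
  have hfible : ∀ q : ZMod p, (Finset.univ.filter fun x : ZMod p => x ^ 2 = q).card ≤ 2 := by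
    intro q
    have h1 : ((Set.toFinset {x : ZMod p | x ^ 2 = q}).card : ℤ) = χ q + 1 :=
      quadraticChar_card_sqrts hp2 q
    have h2 : Set.toFinset {x : ZMod p | x ^ 2 = q}
        = Finset.univ.filter fun x : ZMod p => x ^ 2 = q := by
      ext x; simp
    rw [h2] at h1
    have h3 : χ q ≤ 1 := by
      rcases (quadraticChar_isQuadratic (ZMod p)) q with hh | hh | hh <;> rw [hχ, hh] <;> norm_num
    have : ((Finset.univ.filter fun x : ZMod p => x ^ 2 = q).card : ℤ) ≤ 2 := by linarith
    exact_mod_cast this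
  have hcards : (p : ℕ) = ∑ q ∈ Q, (Finset.univ.filter fun x : ZMod p => x ^ 2 = q).card := by
    have := Finset.card_eq_sum_card_image (fun x : ZMod p => x ^ 2) Finset.univ
    rwa [Finset.card_univ, ZMod.card] at this
  have herase : ∑ q ∈ Q.erase 0, (Finset.univ.filter fun x : ZMod p => x ^ 2 = q).card
      ≤ 2 * (Q.card - 1) := by
    calc ∑ q ∈ Q.erase 0, (Finset.univ.filter fun x : ZMod p => x ^ 2 = q).card
        ≤ ∑ _q ∈ Q.erase 0, 2 := Finset.sum_le_sum fun q _ => hfible q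
      _ = (Q.erase 0).card * 2 := by rw [Finset.sum_const, smul_eq_mul]
      _ = 2 * (Q.card - 1) := by rw [Finset.card_erase_of_mem h0mem]; ring
  have hlow : p ≤ 2 * Q.card - 1 := by
    have hsum0 := Finset.sum_erase_add Q
      (fun q => (Finset.univ.filter fun x : ZMod p => x ^ 2 = q).card) h0mem
    simp only [hfib0] at hsum0
    have hQpos : 1 ≤ Q.card := Finset.card_pos.mpr ⟨0, h0mem⟩
    omega
  have hQp : 1 ≤ Q.card := Finset.card_pos.mpr ⟨0, h0mem⟩
  have : (2 * Q.card - 1 : ℕ) < 2 * Q.card + 1 := by omega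
  -- combine: p ≥ 2Q+1 and p ≤ 2Q-1
  have hupn : 2 * Q.card + 1 ≤ p := by exact_mod_cast hup
  omega
end
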